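/- arXiv:2301.00664 — 2 statements merged into one kernel-verified Lean document; each statement's English description precedes it below -/
import Mathlib

section
/- For all integers n ≥ 1 and 1 ≤ j ≤ n, the expected number of uncovered edges after uncovering j vertices of a uniformly random labeled tree on n vertices satisfies E[K_j^{(n)}] = j(j−1)/n. -/
open scoped Classical
open Filter Topology MeasureTheory

/-- The finite set of all labeled trees on vertex set `Fin n`
(vertex `v : Fin n` carries label `v + 1 ∈ {1, …, n}`). -/
noncomputable def treeSet (n : ℕ) : Finset (SimpleGraph (Fin n)) :=
  Finset.univ.filter fun T => T.IsTree

/-- `uncoverEdges T j` is the number of edges of the subgraph of `T` induced by the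
first `j` vertices (those with label `≤ j`, i.e. `Fin`-value `< j`);
this is `k_j(T)`, the number of uncovered edges after `j` uncover steps. -/
noncomputable def uncoverEdges {n : ℕ} (T : SimpleGraph (Fin n)) (j : ℕ) : ℕ :=
  (Finset.univ.filter fun p : Fin n × Fin n =>
    T.Adj p.1 p.2 ∧ p.1 < p.2 ∧ (p.2 : ℕ) < j).card

/-- The subgraph (on the same vertex set) induced by the vertices with label `≤ k`:
the forest uncovered after `k` steps. -/
def restrictBelow {n : ℕ} (T : SimpleGraph (Fin n)) (k : ℕ) : SimpleGraph (Fin n) where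
  Adj v w := T.Adj v w ∧ (v : ℕ) < k ∧ (w : ℕ) < k
  symm := ⟨fun _ _ ⟨h, hv, hw⟩ => ⟨h.symm, hw, hv⟩⟩
  loopless := ⟨fun v h => T.loopless.irrefl v h.1⟩

section Aux

open SimpleGraph Finset

/-- The star graph centered at `0`. -/
def starGraph (n : ℕ) [NeZero n] : SimpleGraph (Fin n) where
  Adj a b := a ≠ b ∧ (a = 0 ∨ b = 0)
  symm := ⟨fun _ _ ⟨h, h2⟩ => ⟨h.symm, h2.symm⟩⟩
  loopless := ⟨fun v h => h.1 rfl⟩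

lemma starGraph_isTree (n : ℕ) [NeZero n] : (_root_.starGraph n).IsTree := by
  constructor
  · have h0 : ∀ w : Fin n, (_root_.starGraph n).Reachable w 0 := by
      intro w
      by_cases hw : w = 0
      · exact hw ▸ Reachable.refl _
      · exact SimpleGraph.Adj.reachable ⟨hw, Or.inr rfl⟩
    exact ⟨fun u v => (h0 u).trans (h0 v).symm⟩
  · rw [isAcyclic_iff_forall_adj_isBridge]
    have aux : ∀ v : Fin n, v ≠ 0 → (_root_.starGraph n).IsBridge s(0, v) := by
      intro v hv
      rw [isBridge_iff]
      have hdeg : ∀ w, ¬ ((_root_.starGraph n) \ fromEdgeSet {s(0, v)}).Adj v w := by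
        intro w hw
        rw [sdiff_adj, fromEdgeSet_adj] at hw
        obtain ⟨⟨hne, hor⟩, hne2⟩ := hw
        rcases hor with h | h
        · exact hv h
        · exact hne2 ⟨by rw [h, Sym2.eq_swap]; exact Set.mem_singleton _, hne⟩
      intro hre
      obtain ⟨p⟩ := hre.symm
      cases p with
      | nil => exact hv rfl
      | cons h q => exact hdeg _ h
    intro v w h
    rcases h.2 with h0 | h0
    · subst h0; exact aux w (Ne.symm h.1)
    · subst h0; rw [Sym2.eq_swap]; exact aux v h.1

lemma treeSet_nonempty (n : ℕ) (hn : 1 ≤ n) : (treeSet n).Nonempty := by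
  haveI : NeZero n := ⟨Nat.one_le_iff_ne_zero.mp hn⟩
  exact ⟨starGraph n, by simp [treeSet, starGraph_isTree]⟩

lemma isTree_of_iso {V W : Type*} {G : SimpleGraph V} {H : SimpleGraph W}
    (e : G ≃g H) (h : H.IsTree) : G.IsTree := by
  constructor
  · exact e.connected_iff.mpr h.isConnected
  · intro v c hc
    exact h.IsAcyclic (c.map e.toHom) (hc.map e.injective)

lemma exists_perm_pair {n : ℕ} {u v u' v' : Fin n} (h : u ≠ v) (h' : u' ≠ v') :
    ∃ σ : Equiv.Perm (Fin n), σ u = u' ∧ σ v = v' := by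
  set σ₁ := Equiv.swap u u' with hσ₁
  have hσ₁v : σ₁ v ≠ u' := by
    by_cases hvu' : v = u'
    · have huu' : u ≠ u' := fun he => h (he.trans hvu'.symm)
      rw [hσ₁, hvu', Equiv.swap_apply_right]
      exact fun he => huu' (he)
    · rw [hσ₁, Equiv.swap_apply_of_ne_of_ne h.symm hvu']
      exact hvu'
  refine ⟨σ₁.trans (Equiv.swap (σ₁ v) v'), ?_, ?_⟩
  · simp only [Equiv.trans_apply, hσ₁, Equiv.swap_apply_left]
    exact Equiv.swap_apply_of_ne_of_ne hσ₁v.symm h'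
  · simp only [Equiv.trans_apply, Equiv.swap_apply_left]

/-- By relabeling symmetry, the number of trees containing a given edge does not
depend on the edge. -/
lemma count_adj_eq {n : ℕ} {u v u' v' : Fin n} (h : u ≠ v) (h' : u' ≠ v') :
    ((treeSet n).filter fun T => T.Adj u v).card
      = ((treeSet n).filter fun T => T.Adj u' v').card := by
  obtain ⟨σ, hu, hv⟩ := exists_perm_pair h h'
  refine Finset.card_bij' (fun T _ => T.comap ⇑σ.symm) (fun T _ => T.comap ⇑σ)
    ?_ ?_ ?_ ?_
  · intro T hT
    simp only [Finset.mem_filter, treeSet, Finset.mem_univ, true_and] at hT ⊢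
    refine ⟨isTree_of_iso (SimpleGraph.Iso.comap σ.symm T) hT.1, ?_⟩
    show T.Adj (σ.symm u') (σ.symm v')
    rw [← hu, ← hv, Equiv.symm_apply_apply, Equiv.symm_apply_apply]; exact hT.2
  · intro T hT
    simp only [Finset.mem_filter, treeSet, Finset.mem_univ, true_and] at hT ⊢
    refine ⟨isTree_of_iso (SimpleGraph.Iso.comap σ T) hT.1, ?_⟩
    show T.Adj (σ u) (σ v)
    rw [hu, hv]; exact hT.2
  · intro T _
    ext a b
    simp [SimpleGraph.comap_adj]
  · intro T _
    ext a b
    simp [SimpleGraph.comap_adj]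

/-- The number of ordered pairs `p.1 < p.2 < j`. -/
lemma card_pairs {n : ℕ} (j : ℕ) (hj : j ≤ n) :
    (Finset.univ.filter fun p : Fin n × Fin n =>
      p.1 < p.2 ∧ (p.2 : ℕ) < j).card = j.choose 2 := by
  induction j with
  | zero => simp
  | succ j ih =>
    have hj' : j ≤ n := Nat.le_of_succ_le hj
    have hsplit : (Finset.univ.filter fun p : Fin n × Fin n =>
        p.1 < p.2 ∧ (p.2 : ℕ) < j + 1)
        = (Finset.univ.filter fun p : Fin n × Fin n => p.1 < p.2 ∧ (p.2 : ℕ) < j)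
          ∪ (Finset.univ.filter fun p : Fin n × Fin n =>
              p.1 < p.2 ∧ (p.2 : ℕ) = j) := by
      ext p
      simp only [Finset.mem_filter, Finset.mem_union, Finset.mem_univ, true_and]
      constructor
      · rintro ⟨h1, h2⟩
        rcases Nat.lt_succ_iff_lt_or_eq.mp h2 with h | h
        · exact Or.inl ⟨h1, h⟩
        · exact Or.inr ⟨h1, h⟩
      · rintro (⟨h1, h2⟩ | ⟨h1, h2⟩)
        · exact ⟨h1, Nat.lt_succ_of_lt h2⟩
        · exact ⟨h1, by omega⟩
    have hdisj : Disjoint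
        (Finset.univ.filter fun p : Fin n × Fin n => p.1 < p.2 ∧ (p.2 : ℕ) < j)
        (Finset.univ.filter fun p : Fin n × Fin n => p.1 < p.2 ∧ (p.2 : ℕ) = j) := by
      rw [Finset.disjoint_filter]
      rintro p _ ⟨_, h2⟩ ⟨_, h3⟩
      omega
    have hcard2 : (Finset.univ.filter fun p : Fin n × Fin n =>
        p.1 < p.2 ∧ (p.2 : ℕ) = j).card = j := by
      have hjn : j < n := hj
      conv_rhs => rw [← Finset.card_range j]
      refine Finset.card_nbij (fun p : Fin n × Fin n => (p.1 : ℕ)) ?_ ?_ ?_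
      · rintro p hp
        simp only [Finset.mem_coe, Finset.mem_filter, Finset.mem_univ, true_and] at hp
        simp only [Finset.mem_coe, Finset.mem_range]
        omega
      · rintro p hp q hq hpq
        simp only [Finset.coe_filter, Set.mem_setOf_eq] at hp hq
        have : p.2 = q.2 := Fin.ext (hp.2.2.trans hq.2.2.symm)
        have : p.1 = q.1 := Fin.ext hpq
        exact Prod.ext ‹p.1 = q.1› ‹p.2 = q.2›
      · rintro k hk
        simp only [Finset.coe_range, Set.mem_Iio] at hk
        refine ⟨(⟨k, by omega⟩, ⟨j, hjn⟩), ?_, rfl⟩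
        simp only [Finset.mem_coe, Finset.mem_filter, Finset.mem_univ, true_and]
        exact ⟨by rw [Fin.lt_def]; exact hk, trivial⟩
    rw [hsplit, Finset.card_union_of_disjoint hdisj, ih hj', hcard2,
      Nat.choose_succ_succ j 1, Nat.choose_one_right, Nat.add_comm]

/-- The number of ordered pairs with `p.1 < p.2` adjacent equals the number of edges. -/
lemma card_pairs_adj {n : ℕ} (T : SimpleGraph (Fin n)) :
    (Finset.univ.filter fun p : Fin n × Fin n =>
      T.Adj p.1 p.2 ∧ p.1 < p.2).card = T.edgeFinset.card := by
  refine Finset.card_nbij (fun p => s(p.1, p.2)) ?_ ?_ ?_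
  · rintro p hp
    simp only [Finset.mem_coe, Finset.mem_filter, Finset.mem_univ, true_and] at hp ⊢
    rw [SimpleGraph.mem_edgeFinset, SimpleGraph.mem_edgeSet]
    exact hp.1
  · rintro p hp q hq hpq
    simp only [Finset.coe_filter, Set.mem_setOf_eq] at hp hq
    rw [Sym2.eq_iff] at hpq
    rcases hpq with ⟨h1, h2⟩ | ⟨h1, h2⟩
    · exact Prod.ext h1 h2
    · exfalso
      have := hp.2.2
      have := hq.2.2
      rw [← h1, ← h2] at this
      exact absurd (hp.2.2.trans this) (lt_irrefl _)
  · rintro e he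
    simp only [Set.mem_image, SimpleGraph.mem_edgeFinset, Finset.mem_coe] at he ⊢
    induction e with
    | h a b =>
      rw [SimpleGraph.mem_edgeSet] at he
      rcases lt_or_gt_of_ne he.ne with h | h
      · exact ⟨(a, b), by simp [he, h], rfl⟩
      · exact ⟨(b, a), by simp [he.symm, h], Sym2.eq_swap⟩

/-- Interchanging the order of summation. -/
lemma sum_uncover {n : ℕ} (j : ℕ) (u₀ v₀ : Fin n) (h₀ : u₀ ≠ v₀) :
    ∑ T ∈ treeSet n, uncoverEdges T j
      = (Finset.univ.filter fun p : Fin n × Fin n =>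
          p.1 < p.2 ∧ (p.2 : ℕ) < j).card
        * ((treeSet n).filter fun T => T.Adj u₀ v₀).card := by
  have : ∑ T ∈ treeSet n, uncoverEdges T j
      = ∑ p ∈ (Finset.univ.filter fun p : Fin n × Fin n =>
          p.1 < p.2 ∧ (p.2 : ℕ) < j),
          ((treeSet n).filter fun T => T.Adj p.1 p.2).card := by
    simp only [uncoverEdges, Finset.card_filter]
    rw [Finset.sum_comm]
    rw [Finset.sum_filter]
    congr 1
    ext p
    by_cases hp : p.1 < p.2 ∧ (p.2 : ℕ) < j
    · simp [hp]
    · rw [if_neg hp]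
      refine Finset.sum_eq_zero fun T _ => ?_
      rw [if_neg]
      tauto
  rw [this]
  have hall : ∀ p ∈ (Finset.univ.filter fun p : Fin n × Fin n =>
      p.1 < p.2 ∧ (p.2 : ℕ) < j),
      ((treeSet n).filter fun T => T.Adj p.1 p.2).card
        = ((treeSet n).filter fun T => T.Adj u₀ v₀).card := by
    intro p hp
    simp only [Finset.mem_filter, Finset.mem_univ, true_and] at hp
    exact count_adj_eq hp.1.ne h₀
  rw [Finset.sum_congr rfl hall, Finset.sum_const, smul_eq_mul]

end Aux

/-- The expected number of uncovered edges after `j` uncover steps in a uniformly random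
labeled tree on `n` vertices is `j(j-1)/n`. -/
theorem expected_uncovered_edges (n j : ℕ) (hn : 1 ≤ n) (hj1 : 1 ≤ j) (hjn : j ≤ n) :
    (∑ T ∈ treeSet n, (uncoverEdges T j : ℝ)) / ((treeSet n).card : ℝ)
      = (j : ℝ) * ((j : ℝ) - 1) / (n : ℝ) := by
  by_cases hj : j = 1
  · subst hj
    have : ∀ T : SimpleGraph (Fin n), uncoverEdges T 1 = 0 := by
      intro T
      rw [uncoverEdges, Finset.card_eq_zero, Finset.filter_eq_empty_iff]
      rintro p _ ⟨_, h1, h2⟩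
      have := Fin.lt_iff_val_lt_val.mp h1
      omega
    simp [this]
  · -- now j ≥ 2, n ≥ 2
    have hj2 : 2 ≤ j := by omega
    have hn2 : 2 ≤ n := le_trans hj2 hjn
    have h01 : (⟨0, by omega⟩ : Fin n) ≠ ⟨1, by omega⟩ := by
      simp [Fin.ext_iff]
    set u₀ : Fin n := ⟨0, by omega⟩
    set v₀ : Fin n := ⟨1, by omega⟩
    set c : ℕ := ((treeSet n).filter fun T => T.Adj u₀ v₀).card with hc
    set N : ℕ := (treeSet n).card with hN
    have hNpos : 0 < N := Finset.card_pos.mpr (treeSet_nonempty n hn)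
    -- key counting identities
    have key : ∀ k : ℕ, k ≤ n → ∑ T ∈ treeSet n, uncoverEdges T k = k.choose 2 * c := by
      intro k hk
      rw [sum_uncover k u₀ v₀ h01, card_pairs k hk]
    -- each tree has n - 1 edges, and uncoverEdges T n counts all edges
    have huncn : ∀ T ∈ treeSet n, uncoverEdges T n = n - 1 := by
      intro T hT
      simp only [treeSet, Finset.mem_filter, Finset.mem_univ, true_and] at hT
      have h1 : uncoverEdges T n = T.edgeFinset.card := by
        rw [uncoverEdges, ← card_pairs_adj T]
        congr 1
        ext p
        simp only [Finset.mem_filter, Finset.mem_univ, true_and]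
        exact ⟨fun h => ⟨h.1, h.2.1⟩, fun h => ⟨h.1, h.2, p.2.isLt⟩⟩
      have h2 := hT.card_edgeFinset
      rw [Fintype.card_fin] at h2
      omega
    have hsum_n : ∑ T ∈ treeSet n, uncoverEdges T n = N * (n - 1) := by
      rw [Finset.sum_congr rfl huncn, Finset.sum_const, smul_eq_mul]
    have hmain : n.choose 2 * c = N * (n - 1) := by
      rw [← key n le_rfl, hsum_n]
    -- pass to the reals
    have hmainR : (n : ℝ) * ((n : ℝ) - 1) / 2 * (c : ℝ) = (N : ℝ) * ((n : ℝ) - 1) := by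
      have := congrArg (fun x : ℕ => (x : ℝ)) hmain
      push_cast [Nat.cast_choose_two] at this
      rw [Nat.cast_sub (by omega)] at this
      push_cast at this
      linarith [this]
    have hcR : (n : ℝ) * (c : ℝ) = 2 * (N : ℝ) := by
      have hn1 : (n : ℝ) - 1 ≠ 0 := by
        have : (2 : ℝ) ≤ (n : ℝ) := by exact_mod_cast hn2
        intro h; nlinarith
      have h2 : ((n : ℝ) * (c : ℝ) - 2 * (N : ℝ)) * ((n : ℝ) - 1) = 0 := by ring_nf; nlinarith [hmainR]
      rcases mul_eq_zero.mp h2 with h | h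
      · linarith
      · exact absurd h hn1
    have hsumR : (∑ T ∈ treeSet n, (uncoverEdges T j : ℝ))
        = (j : ℝ) * ((j : ℝ) - 1) / 2 * (c : ℝ) := by
      have := congrArg (fun x : ℕ => (x : ℝ)) (key j hjn)
      push_cast [Nat.cast_choose_two] at this
      rw [this]
    rw [hsumR]
    have hnR : (n : ℝ) ≠ 0 := by positivity
    have hNR : (N : ℝ) ≠ 0 := by
      simp only [ne_eq, Nat.cast_eq_zero]
      omega
    have hcN : (c : ℝ) / (N : ℝ) = 2 / (n : ℝ) := by
      rw [div_eq_div_iff hNR hnR]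
      linarith [hcR]
    rw [mul_div_assoc, hcN]
    ring
end

section
/- For integers n ≥ 1 and 0 ≤ m ≤ k ≤ n, the root cluster size has the following exact distribution: P(R_n^{(k)} = 0) = 1 − k/n; for 1 ≤ m ≤ k < n, P(R_n^{(k)} = m) = binom(k, m) · m^m · (n − k) · (n − m)^{k − m − 1} / n^k, where for m = k the factor (n − k)·(n − m)^{k−m−1} is the rational number (n−k)·(n−k)^{−1} = 1; and P(R_n^{(n)} = n) = 1. -/
open scoped Classical
open Filter Topology MeasureTheory

/-- The finite set of all rooted labeled trees on vertex set `Fin n`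
(a tree together with a distinguished root vertex); there are `n^(n-1)` of them. -/
noncomputable def rootedTreeSet (n : ℕ) : Finset (SimpleGraph (Fin n) × Fin n) :=
  Finset.univ.filter fun p => p.1.IsTree

/-- `rootCluster T ρ k` is the number of vertices of the connected component containing
the root `ρ` in the subgraph of `T` induced by the vertices with label `≤ k`;
it is `0` if the root's label exceeds `k`. -/
noncomputable def rootCluster {n : ℕ} (T : SimpleGraph (Fin n)) (ρ : Fin n) (k : ℕ) : ℕ :=
  (Finset.univ.filter fun v : Fin n =>
    (v : ℕ) < k ∧ (restrictBelow T k).Reachable ρ v).card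

/-- `E[R_n^{(k)}]`: the expected root cluster size after `k` uncover steps in a uniformly
random rooted labeled tree on `n` vertices. -/
noncomputable def expectR (n k : ℕ) : ℝ :=
  (∑ p ∈ rootedTreeSet n, (rootCluster p.1 p.2 k : ℝ)) / ((rootedTreeSet n).card : ℝ)

/-- `P(R_n^{(k)} = m)` for a uniformly random rooted labeled tree on `n` vertices. -/
noncomputable def probR (n k m : ℕ) : ℝ :=
  (((rootedTreeSet n).filter fun p => rootCluster p.1 p.2 k = m).card : ℝ)
    / ((rootedTreeSet n).card : ℝ)


set_option maxHeartbeats 1000000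
section AuxCounting
open Finset
variable {α : Type*} [Fintype α] [DecidableEq α]


variable {α : Type*} [Fintype α] [DecidableEq α]

/-- iterates of `f` and `g` agree as long as the points satisfy `Q`, where `f = g` on `Q`. -/
lemma iter_agree {f g : α → α} {Q : α → Prop} (hfg : ∀ x, Q x → f x = g x) :
    ∀ (j : ℕ) (v : α), (∀ i < j, Q (f^[i] v)) → f^[j] v = g^[j] v := by
  intro j
  induction j with
  | zero => intro v _; rfl
  | succ j ih =>
    intro v h
    rw [Function.iterate_succ_apply', Function.iterate_succ_apply',
      ← ih v (fun i hi => h i (Nat.lt_succ_of_lt hi))]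
    exact hfg _ (h j (Nat.lt_succ_self j))

lemma iter_stay {f : α → α} {B : Finset α} (hB : ∀ x ∈ B, f x ∈ B) {v : α} (hv : v ∈ B) :
    ∀ i : ℕ, f^[i] v ∈ B := by
  intro i
  induction i with
  | zero => exact hv
  | succ i ih => rw [Function.iterate_succ_apply']; exact hB _ ih

/-- first hит: minimal entry into `R` along the orbit, staying in `A` before. -/
lemma first_hit {f : α → α} {A R : Finset α} (hAR : Disjoint A R)
    (hmap : ∀ v ∈ A, f v ∈ A ∪ R) {v : α} (hv : v ∈ A) (hreach : ∃ j, f^[j] v ∈ R) :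
    ∃ j, f^[j] v ∈ R ∧ ∀ i < j, f^[i] v ∈ A := by
  classical
  refine ⟨Nat.find hreach, Nat.find_spec hreach, ?_⟩
  intro i hi
  induction i with
  | zero => exact hv
  | succ i ih =>
    have hiA : f^[i] v ∈ A := ih (Nat.lt_of_succ_lt hi)
    have := hmap _ hiA
    rw [mem_union] at this
    rcases this with h | h
    · rwa [Function.iterate_succ_apply']
    · exact absurd (by rwa [Function.iterate_succ_apply']) (Nat.find_min hreach hi)

/-- The set of "forest functions": identity off `A`, mapping `A` into `A ∪ R`,
every point of `A` eventually reaching `R`, and points of `F` not mapping directly to `R`. -/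
noncomputable def CF (A R F : Finset α) : Finset (α → α) :=
  univ.filter fun f => (∀ v, v ∉ A → f v = v) ∧ (∀ v ∈ A, f v ∈ A ∪ R) ∧
    (∀ v ∈ A, ∃ j, f^[j] v ∈ R) ∧ (∀ v ∈ F, f v ∉ R)

lemma mem_CF {A R F : Finset α} {f : α → α} :
    f ∈ CF A R F ↔ (∀ v, v ∉ A → f v = v) ∧ (∀ v ∈ A, f v ∈ A ∪ R) ∧
      (∀ v ∈ A, ∃ j, f^[j] v ∈ R) ∧ (∀ v ∈ F, f v ∉ R) := by
  simp [CF]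

lemma CF_empty (R : Finset α) : CF (∅ : Finset α) R ∅ = {id} := by
  ext f
  simp only [mem_CF, mem_singleton]
  constructor
  · rintro ⟨h1, -, -, -⟩
    funext v
    exact h1 v (notMem_empty v)
  · rintro rfl
    refine ⟨fun v _ => rfl, fun v hv => absurd hv (notMem_empty v), fun v hv => absurd hv (notMem_empty v), fun v hv => absurd hv (notMem_empty v)⟩

lemma CF_R_empty {A : Finset α} (hA : A.Nonempty) (F : Finset α) : CF A (∅ : Finset α) F = ∅ := by
  ext f
  simp only [mem_CF, notMem_empty, iff_false]
  rintro ⟨-, -, h3, -⟩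
  obtain ⟨v, hv⟩ := hA
  obtain ⟨j, hj⟩ := h3 v hv
  exact hj

noncomputable def pFun (C R : Finset α) : Finset (α → α) :=
  univ.filter fun g => (∀ v, v ∉ C → g v = v) ∧ ∀ v ∈ C, g v ∈ R

lemma mem_pFun {C R : Finset α} {g : α → α} :
    g ∈ pFun C R ↔ (∀ v, v ∉ C → g v = v) ∧ ∀ v ∈ C, g v ∈ R := by simp [pFun]

lemma pFun_card (C R : Finset α) : (pFun C R).card = R.card ^ C.card := by
  classical
  have : (pFun C R).card = (C.pi fun _ => R).card := by
    refine Finset.card_bij' (fun g _hg => fun a _ha => g a)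
      (fun p _hp => fun v => if h : v ∈ C then p v h else v) ?_ ?_ ?_ ?_
    · intro g hg
      rw [mem_pFun] at hg
      rw [Finset.mem_pi]
      intro a ha
      exact hg.2 a ha
    · intro p hp
      rw [Finset.mem_pi] at hp
      rw [mem_pFun]
      constructor
      · intro v hv; simp [dif_neg hv]
      · intro v hv; simpa [dif_pos hv] using hp v hv
    · intro g hg
      rw [mem_pFun] at hg
      funext v
      by_cases h : v ∈ C
      · simp [dif_pos h]
      · simp [dif_neg h, hg.1 v h]
    · intro p hp
      funext v hv
      simp [dif_pos hv]
  rw [this, Finset.card_pi, Finset.prod_const]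

/-- Abel-type identity from the binomial theorem. -/
lemma E_id (M r b : ℕ) :
    ∑ c ∈ range (M + 1), M.choose c * (c * (r ^ c * b ^ (M - c)))
      = M * (r * ((r + b) ^ (M - 1))) := by
  rcases Nat.eq_zero_or_pos M with rfl | hM
  · simp
  rw [Finset.sum_range_succ']
  simp only [Nat.choose_zero_right, pow_zero, Nat.mul_zero, Nat.zero_mul, mul_zero, zero_mul, add_zero]
  have key : ∀ j, M.choose (j+1) * ((j+1) * (r ^ (j+1) * b ^ (M - (j+1))))
      = M * (r * ((M-1).choose j * (r ^ j * b ^ (M - 1 - j)))) := by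
    intro j
    have h1 : M * (M-1).choose j = M.choose (j+1) * (j+1) := by
      have := Nat.add_one_mul_choose_eq (M - 1) j
      rwa [Nat.sub_add_cancel hM] at this
    have h2 : M - (j+1) = M - 1 - j := by omega
    calc M.choose (j+1) * ((j+1) * (r ^ (j+1) * b ^ (M - (j+1))))
        = (M.choose (j+1) * (j+1)) * (r ^ (j+1) * b ^ (M - (j+1))) := by ring
      _ = (M * (M-1).choose j) * (r ^ (j+1) * b ^ (M-1-j)) := by rw [h1, h2]
      _ = M * (r * ((M-1).choose j * (r ^ j * b ^ (M - 1 - j)))) := by rw [pow_succ]; ring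
  calc ∑ j ∈ range M, M.choose (j+1) * ((j+1) * (r ^ (j+1) * b ^ (M - (j+1))))
      = ∑ j ∈ range M, M * (r * ((M-1).choose j * (r ^ j * b ^ (M - 1 - j)))) :=
        Finset.sum_congr rfl fun j _ => key j
    _ = M * (r * (∑ j ∈ range M, (M-1).choose j * (r ^ j * b ^ (M - 1 - j)))) := by
        rw [Finset.mul_sum]; congr 1; rw [Finset.mul_sum]
    _ = M * (r * ((r + b) ^ (M - 1))) := by
        congr 2
        rw [add_pow r b (M-1)]
        refine Finset.sum_congr (by rw [Nat.sub_add_cancel hM]) fun j hj => ?_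
        push_cast
        ring



lemma CF_rec (A R F : Finset α) (hAR : Disjoint A R) (hFA : F ⊆ A) (hA : A.Nonempty) :
    (CF A R F).card
      = ∑ C ∈ (A \ F).powerset, R.card ^ C.card * (CF (A \ C) C ∅).card := by
  classical
  have hmaps : ∀ f ∈ CF A R F, (A.filter fun v => f v ∈ R) ∈ (A \ F).powerset := by
    intro f hf
    rw [mem_CF] at hf
    rw [mem_powerset]
    intro v hv
    rw [mem_filter] at hv
    rw [Finset.mem_sdiff]
    refine ⟨hv.1, fun hvF => hf.2.2.2 v hvF hv.2⟩
  rw [Finset.card_eq_sum_card_fiberwise hmaps]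
  refine Finset.sum_congr rfl fun C hC => ?_
  rw [mem_powerset] at hC
  have hCA : C ⊆ A := hC.trans (sdiff_subset)
  rcases eq_or_ne C ∅ with rfl | hCne
  · -- empty fiber on both sides
    rw [sdiff_empty, CF_R_empty hA]
    simp only [Finset.card_empty, Nat.mul_zero]
    rw [Finset.card_eq_zero, Finset.eq_empty_iff_forall_notMem]
    intro f hf
    rw [mem_filter] at hf
    obtain ⟨hf, hkey⟩ := hf
    rw [mem_CF] at hf
    obtain ⟨v, hv⟩ := hA
    obtain ⟨j, hjR, hjA⟩ := first_hit hAR hf.2.1 hv (hf.2.2.1 v hv)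
    have hj0 : j ≠ 0 := by
      rintro rfl
      exact (Finset.disjoint_left.mp hAR) hv hjR
    have hw : f^[j-1] v ∈ A := hjA _ (by omega)
    have : f^[j-1] v ∈ A.filter fun w => f w ∈ R := by
      rw [mem_filter]
      refine ⟨hw, ?_⟩
      have h11 : f^[j] v = f (f^[j-1] v) := by
        conv_lhs => rw [show j = (j-1)+1 by omega]
        rw [Function.iterate_succ_apply']
      rwa [h11] at hjR
    rw [hkey] at this
    exact absurd this (notMem_empty _)
  · -- fiber ≃ pFun C R ×ˢ CF (A \ C) C ∅
    have hCA' : C.Nonempty := nonempty_iff_ne_empty.mpr hCne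
    have hdisj2 : Disjoint (A \ C) C := sdiff_disjoint
    rw [← pFun_card C R, ← Finset.card_product]
    refine Finset.card_bij'
      (fun f _hf => ((fun v => if v ∈ C then f v else v), (fun v => if v ∈ C then v else f v)))
      (fun gh _hgh => fun v => if v ∈ C then gh.1 v else gh.2 v)
      ?_ ?_ ?_ ?_
    · -- forward membership
      intro f hf
      rw [mem_filter] at hf
      obtain ⟨hf', hkey⟩ := hf
      rw [mem_CF] at hf'
      obtain ⟨hid, hmap, hreach, hF⟩ := hf'
      have hfR : ∀ v ∈ C, f v ∈ R := by
        intro v hv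
        have : v ∈ A.filter fun w => f w ∈ R := by rw [hkey]; exact hv
        exact (mem_filter.mp this).2
      have hfnR : ∀ v ∈ A, v ∉ C → f v ∉ R := by
        intro v hv hvC hfv
        exact hvC (by rw [← hkey, mem_filter]; exact ⟨hv, hfv⟩)
      rw [Finset.mem_product]
      constructor
      · rw [mem_pFun]
        refine ⟨fun v hv => by simp only [if_neg hv], fun v hv => by simp only [if_pos hv]; exact hfR v hv⟩
      · rw [mem_CF]
        refine ⟨?_, ?_, ?_, fun v hv => absurd hv (notMem_empty v)⟩
        · intro v hv
          rw [Finset.mem_sdiff, not_and, not_not] at hv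
          by_cases hvC : v ∈ C
          · simp only [if_pos hvC]
          · simp only [if_neg hvC]
            exact hid v (fun hvA => hvC (hv hvA))
        · intro v hv
          rw [Finset.mem_sdiff] at hv
          simp only [if_neg hv.2]
          rw [sdiff_union_of_subset hCA]
          have := hmap v hv.1
          rw [mem_union] at this
          rcases this with h | h
          · exact h
          · exact absurd h (hfnR v hv.1 hv.2)
        · intro v hv
          rw [Finset.mem_sdiff] at hv
          have hCmem : ∀ w, w ∈ A → f w ∈ R → w ∈ C := by
            intro w hw hfw
            rw [← hkey, mem_filter]; exact ⟨hw, hfw⟩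
          -- first hit of R by f-orbit; the step before is in C
          obtain ⟨j, hjR, hjA⟩ := first_hit hAR hmap hv.1 (hreach v hv.1)
          have hj0 : j ≠ 0 := by
            rintro rfl
            exact (Finset.disjoint_left.mp hAR) hv.1 hjR
          have hw : f^[j-1] v ∈ C := by
            have hwA : f^[j-1] v ∈ A := hjA _ (by omega)
            have hfwR : f (f^[j-1] v) ∈ R := by
              have h11 : f^[j] v = f (f^[j-1] v) := by
                conv_lhs => rw [show j = (j-1)+1 by omega]
                rw [Function.iterate_succ_apply']
              rwa [h11] at hjR
            exact hCmem _ hwA hfwR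
          have hex : ∃ i, f^[i] v ∈ C := ⟨j - 1, hw⟩
          refine ⟨Nat.find hex, ?_⟩
          have hagree : f^[Nat.find hex] v = (fun v => if v ∈ C then v else f v)^[Nat.find hex] v := by
            refine iter_agree (Q := fun x => x ∉ C) (fun x hx => by simp [if_neg hx]) _ _ ?_
            intro i hi
            exact Nat.find_min hex hi
          rw [← hagree]
          exact Nat.find_spec hex
    · -- backward membership
      rintro ⟨g, h⟩ hgh
      dsimp only
      rw [Finset.mem_product, mem_pFun, mem_CF] at hgh
      obtain ⟨⟨hg1, hg2⟩, hh1, hh2, hh3, -⟩ := hgh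
      set f : α → α := fun v => if v ∈ C then g v else h v with hfdef
      have hfg : ∀ v ∈ C, f v = g v := fun v hv => by simp only [hfdef, if_pos hv]
      have hfh : ∀ v, v ∉ C → f v = h v := fun v hv => by simp only [hfdef, if_neg hv]
      have hkey : (A.filter fun w => f w ∈ R) = C := by
        ext w
        rw [mem_filter]
        constructor
        · rintro ⟨hwA, hwR⟩
          by_contra hwC
          rw [hfh w hwC] at hwR
          have hwAC : w ∈ A \ C := Finset.mem_sdiff.mpr ⟨hwA, hwC⟩
          have := hh2 w hwAC
          rw [sdiff_union_of_subset hCA] at this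
          exact (Finset.disjoint_left.mp hAR) this hwR
        · intro hwC
          refine ⟨hCA hwC, ?_⟩
          rw [hfg w hwC]
          exact hg2 w hwC
      rw [mem_filter, mem_CF]
      refine ⟨⟨?_, ?_, ?_, ?_⟩, hkey⟩
      · intro v hv
        have hvC : v ∉ C := fun hc => hv (hCA hc)
        have hvAC : v ∉ A \ C := fun hc => hv (Finset.mem_sdiff.mp hc).1
        rw [hfh v hvC]
        exact hh1 v hvAC
      · intro v hv
        by_cases hvC : v ∈ C
        · rw [hfg v hvC]
          exact mem_union_right _ (hg2 v hvC)
        · rw [hfh v hvC]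
          have := hh2 v (Finset.mem_sdiff.mpr ⟨hv, hvC⟩)
          rw [sdiff_union_of_subset hCA] at this
          exact mem_union_left _ this
      · intro v hv
        by_cases hvC : v ∈ C
        · exact ⟨1, by rw [Function.iterate_one, hfg v hvC]; exact hg2 v hvC⟩
        · have hvAC : v ∈ A \ C := Finset.mem_sdiff.mpr ⟨hv, hvC⟩
          obtain ⟨i, hiC, hiA⟩ := first_hit sdiff_disjoint hh2 hvAC (hh3 v hvAC)
          have hagree : h^[i] v = f^[i] v := by
            refine iter_agree (Q := fun x => x ∈ A \ C) ?_ _ _ hiA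
            intro x hx
            rw [hfh x (Finset.mem_sdiff.mp hx).2]
          refine ⟨i + 1, ?_⟩
          rw [Function.iterate_succ_apply', ← hagree]
          rw [hfg _ hiC]
          exact hg2 _ hiC
      · intro v hvF
        have hvC : v ∉ C := fun hc => (Finset.mem_sdiff.mp (hC hc)).2 hvF
        have hvA : v ∈ A := hFA hvF
        rw [hfh v hvC]
        intro hvR
        have := hh2 v (Finset.mem_sdiff.mpr ⟨hvA, hvC⟩)
        rw [sdiff_union_of_subset hCA] at this
        exact (Finset.disjoint_left.mp hAR) this hvR
    · -- left inverse
      intro f hf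
      funext v
      by_cases hvC : v ∈ C <;> simp [hvC]
    · -- right inverse
      rintro ⟨g, h⟩ hgh
      dsimp only
      rw [Finset.mem_product, mem_pFun, mem_CF] at hgh
      obtain ⟨⟨hg1, hg2⟩, hh1, hh2, hh3, -⟩ := hgh
      refine Prod.ext ?_ ?_
      · funext v
        by_cases hvC : v ∈ C
        · simp [hvC]
        · simp only [if_neg hvC]
          exact (hg1 v hvC).symm
      · funext v
        by_cases hvC : v ∈ C
        · simp only [if_pos hvC]
          have : v ∉ A \ C := fun hc => (Finset.mem_sdiff.mp hc).2 hvC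
          exact (hh1 v this).symm
        · simp [hvC]





def phi1 (a r c : ℕ) : ℕ :=
  if c = 0 then 0 else if c = a then r ^ a else r ^ c * (c * a ^ (a - c - 1))

def phi2 (a r c : ℕ) : ℕ := if c = 0 then 0 else r ^ c * (c * a ^ (a - c - 1))

lemma CF_card_L1 : ∀ (N : ℕ) (A R : Finset α), A.card = N → Disjoint A R → R.Nonempty →
    (CF A R ∅).card = if A = ∅ then 1 else R.card * (A.card + R.card) ^ (A.card - 1) := by
  intro N
  induction N using Nat.strong_induction_on with
  | _ N ih =>
  intro A R hN hAR hR
  rcases eq_or_ne A ∅ with rfl | hAne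
  · rw [if_pos rfl, CF_empty, Finset.card_singleton]
  have hA : A.Nonempty := nonempty_iff_ne_empty.mpr hAne
  have ha : 0 < A.card := Finset.card_pos.mpr hA
  rw [if_neg hAne]
  rw [CF_rec A R ∅ hAR (empty_subset A) hA, sdiff_empty]
  have hterm : ∀ C ∈ A.powerset, R.card ^ C.card * (CF (A \ C) C ∅).card
      = phi1 A.card R.card C.card := by
    intro C hC
    rw [mem_powerset] at hC
    rcases eq_or_ne C ∅ with rfl | hCne
    · rw [sdiff_empty, CF_R_empty hA]
      simp [phi1]
    · have hCpos : C.Nonempty := nonempty_iff_ne_empty.mpr hCne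
      have hCcard : 0 < C.card := Finset.card_pos.mpr hCpos
      have hcards : (A \ C).card + C.card = A.card := Finset.card_sdiff_add_card_eq_card hC
      have hsub : (A \ C).card < N := by
        subst hN
        omega
      rw [ih (A \ C).card hsub (A \ C) C rfl sdiff_disjoint hCpos]
      rw [phi1, if_neg (by omega : ¬ C.card = 0)]
      rcases eq_or_ne C.card A.card with hca | hca
      · have hCA : C = A := Finset.eq_of_subset_of_card_le hC (le_of_eq hca.symm)
        subst hCA
        rw [if_pos (Finset.sdiff_self C), if_pos hca, hca, mul_one]
      · have hACne : ¬ (A \ C = ∅) := by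
          intro hh
          rw [hh] at hcards
          simp only [Finset.card_empty, Nat.zero_add] at hcards
          exact hca hcards
        rw [if_neg hACne, if_neg hca, hcards]
        have he : (A \ C).card - 1 = A.card - C.card - 1 := by omega
        rw [he]
  have h1 : (∑ C ∈ A.powerset, R.card ^ C.card * (CF (A \ C) C ∅).card)
      = ∑ c ∈ range (A.card + 1), (A.card).choose c • phi1 A.card R.card c :=
    (Finset.sum_congr rfl hterm).trans (Finset.sum_powerset_apply_card _)
  rw [h1]
  refine Nat.eq_of_mul_eq_mul_left ha ?_
  rw [Finset.mul_sum]
  have hstep : ∀ c ∈ range (A.card + 1),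
      A.card * ((A.card).choose c • phi1 A.card R.card c)
        = A.card.choose c * (c * (R.card ^ c * A.card ^ (A.card - c))) := by
    intro c hc
    rw [mem_range] at hc
    rw [smul_eq_mul, phi1]
    rcases eq_or_ne c 0 with rfl | hc0
    · simp
    rcases eq_or_ne c A.card with rfl | hca
    · rw [if_neg hc0, if_pos rfl]
      simp only [Nat.sub_self, pow_zero]
      ring
    · rw [if_neg hc0, if_neg hca]
      have hpow : A.card ^ (A.card - c) = A.card * A.card ^ (A.card - c - 1) := by
        conv_lhs => rw [show A.card - c = (A.card - c - 1) + 1 by omega]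
        rw [pow_succ']
      rw [hpow]
      ring
  rw [Finset.sum_congr rfl hstep, E_id A.card R.card A.card, Nat.add_comm R.card A.card]

lemma CF_card_L2 (A R F : Finset α) (hAR : Disjoint A R) (hFA : F ⊆ A) (hR : R.Nonempty)
    (hF : F.Nonempty) (hb : (A \ F).Nonempty) :
    (CF A R F).card
      = (A \ F).card * (R.card * (A.card ^ (F.card - 1)
          * (R.card + A.card) ^ ((A \ F).card - 1))) := by
  have hA : A.Nonempty := hF.mono hFA
  have ha : 0 < A.card := Finset.card_pos.mpr hA
  have hfa : 0 < F.card := Finset.card_pos.mpr hF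
  have hbb : 0 < (A \ F).card := Finset.card_pos.mpr hb
  have hab : (A \ F).card + F.card = A.card := Finset.card_sdiff_add_card_eq_card hFA
  rw [CF_rec A R F hAR hFA hA]
  have hterm : ∀ C ∈ (A \ F).powerset, R.card ^ C.card * (CF (A \ C) C ∅).card
      = phi2 A.card R.card C.card := by
    intro C hC
    rw [mem_powerset] at hC
    have hCA : C ⊆ A := hC.trans sdiff_subset
    rcases eq_or_ne C ∅ with rfl | hCne
    · rw [sdiff_empty, CF_R_empty hA]
      simp [phi2]
    · have hCpos : C.Nonempty := nonempty_iff_ne_empty.mpr hCne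
      have hCcard : 0 < C.card := Finset.card_pos.mpr hCpos
      have hcb : C.card ≤ (A \ F).card := Finset.card_le_card hC
      have hcards : (A \ C).card + C.card = A.card := Finset.card_sdiff_add_card_eq_card hCA
      rw [CF_card_L1 (A \ C).card (A \ C) C rfl sdiff_disjoint hCpos]
      have hACne : ¬ (A \ C = ∅) := by
        intro hh
        rw [hh] at hcards
        simp only [Finset.card_empty, Nat.zero_add] at hcards
        omega
      rw [phi2, if_neg hACne, if_neg (by omega : ¬ C.card = 0), hcards]
      have he : (A \ C).card - 1 = A.card - C.card - 1 := by omega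
      rw [he]
  have h1 : (∑ C ∈ (A \ F).powerset, R.card ^ C.card * (CF (A \ C) C ∅).card)
      = ∑ c ∈ range ((A \ F).card + 1), ((A \ F).card).choose c • phi2 A.card R.card c :=
    (Finset.sum_congr rfl hterm).trans (Finset.sum_powerset_apply_card _)
  rw [h1]
  have hstep : ∀ c ∈ range ((A \ F).card + 1),
      ((A \ F).card).choose c • phi2 A.card R.card c
        = A.card ^ (F.card - 1)
            * ((A \ F).card.choose c * (c * (R.card ^ c * A.card ^ ((A \ F).card - c)))) := by
    intro c hc
    rw [mem_range] at hc
    rw [smul_eq_mul, phi2]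
    rcases eq_or_ne c 0 with rfl | hc0
    · simp
    · rw [if_neg hc0]
      rw [show A.card - c - 1 = (F.card - 1) + ((A \ F).card - c) by omega, pow_add]
      ring
  rw [Finset.sum_congr rfl hstep, ← Finset.mul_sum, E_id (A \ F).card R.card A.card]
  ring

end AuxCounting

section AuxGraph
open Finset

open SimpleGraph

variable {n : ℕ}

def GoodF (f : Fin n → Fin n) (ρ : Fin n) : Prop := f ρ = ρ ∧ ∀ v, ∃ j, f^[j] v = ρ

def funToGraph (f : Fin n → Fin n) : SimpleGraph (Fin n) :=
  SimpleGraph.fromRel (fun v w => f v = w)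

lemma funToGraph_adj {f : Fin n → Fin n} {v w : Fin n} :
    (funToGraph f).Adj v w ↔ v ≠ w ∧ (f v = w ∨ f w = v) := by
  simp [funToGraph]

lemma GoodF.fix_iff {f : Fin n → Fin n} {ρ : Fin n} (hf : GoodF f ρ) {x : Fin n} :
    f x = x ↔ x = ρ := by
  constructor
  · intro hx
    obtain ⟨j, hj⟩ := hf.2 x
    have : f^[j] x = x := Function.iterate_fixed hx j
    rw [this] at hj
    exact hj
  · rintro rfl
    exact hf.1

lemma GoodF.reach_aux {f : Fin n → Fin n} {ρ : Fin n} (hf : GoodF f ρ) :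
    ∀ (j : ℕ) (v : Fin n), f^[j] v = ρ → (funToGraph f).Reachable v ρ := by
  intro j
  induction j with
  | zero => intro v hv; exact hv ▸ Reachable.refl v
  | succ j ih =>
    intro v hv
    by_cases hfv : f v = v
    · have : f^[j+1] v = v := Function.iterate_fixed hfv (j+1)
      rw [this] at hv
      exact hv ▸ Reachable.refl v
    · have hadj : (funToGraph f).Adj v (f v) := funToGraph_adj.mpr ⟨fun h => hfv h.symm, Or.inl rfl⟩
      rw [Function.iterate_succ_apply] at hv
      exact hadj.reachable.trans (ih (f v) hv)

lemma GoodF.connected {f : Fin n → Fin n} {ρ : Fin n} (hf : GoodF f ρ) :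
    (funToGraph f).Connected := by
  rw [SimpleGraph.connected_iff]
  refine ⟨fun v w => ?_, ⟨ρ⟩⟩
  obtain ⟨j, hj⟩ := hf.2 v
  obtain ⟨j', hj'⟩ := hf.2 w
  exact (hf.reach_aux j v hj).trans (hf.reach_aux j' w hj').symm

/-- hitting time of the root -/
noncomputable def hitT (f : Fin n → Fin n) (ρ v : Fin n) : ℕ :=
  if h : ∃ j, f^[j] v = ρ then Nat.find h else 0

lemma hitT_spec {f : Fin n → Fin n} {ρ : Fin n} (hf : GoodF f ρ) (v : Fin n) :
    f^[hitT f ρ v] v = ρ := by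
  rw [hitT, dif_pos (hf.2 v)]
  exact Nat.find_spec (hf.2 v)

lemma hitT_lt {f : Fin n → Fin n} {ρ : Fin n} (hf : GoodF f ρ) {v : Fin n} (hv : v ≠ ρ) :
    hitT f ρ (f v) < hitT f ρ v := by
  have h0 : 0 < hitT f ρ v := by
    rcases Nat.eq_zero_or_pos (hitT f ρ v) with h | h
    · exfalso
      have := hitT_spec hf v
      rw [h] at this
      exact hv this
    · exact h
  have hle : hitT f ρ (f v) ≤ hitT f ρ v - 1 := by
    rw [hitT, dif_pos (hf.2 (f v))]
    refine Nat.find_le ?_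
    have h2 : f^[(hitT f ρ v - 1) + 1] v = ρ := by
      rw [show hitT f ρ v - 1 + 1 = hitT f ρ v by omega]
      exact hitT_spec hf v
    rw [Function.iterate_succ_apply] at h2
    exact h2
  omega

lemma exists_path {f : Fin n → Fin n} {ρ : Fin n} (hf : GoodF f ρ) :
    ∀ (N : ℕ) (v : Fin n), hitT f ρ v ≤ N →
      ∃ p : (funToGraph f).Walk v ρ, p.IsPath ∧ (∀ u ∈ p.support, hitT f ρ u ≤ hitT f ρ v)
        ∧ (v ≠ ρ → p.getVert 1 = f v) := by
  intro N
  induction N with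
  | zero =>
    intro v hv
    have hvρ : v = ρ := by
      have := hitT_spec hf v
      rw [Nat.le_zero.mp hv] at this
      exact this
    subst hvρ
    exact ⟨SimpleGraph.Walk.nil, SimpleGraph.Walk.IsPath.nil,
      by simp [SimpleGraph.Walk.support_nil], fun h => absurd rfl h⟩
  | succ N ih =>
    intro v hv
    by_cases hvρ : v = ρ
    · subst hvρ
      exact ⟨SimpleGraph.Walk.nil, SimpleGraph.Walk.IsPath.nil,
        by simp [SimpleGraph.Walk.support_nil], fun h => absurd rfl h⟩
    · have hlt : hitT f ρ (f v) < hitT f ρ v := hitT_lt hf hvρ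
      obtain ⟨p', hp', hsup', -⟩ := ih (f v) (by omega)
      have hadj : (funToGraph f).Adj v (f v) :=
        funToGraph_adj.mpr ⟨fun h => hvρ (hf.fix_iff.mp h.symm), Or.inl rfl⟩
      have hvnot : v ∉ p'.support := by
        intro hmem
        have := hsup' v hmem
        omega
      refine ⟨SimpleGraph.Walk.cons hadj p', (SimpleGraph.Walk.cons_isPath_iff _ _).mpr ⟨hp', hvnot⟩, ?_, ?_⟩
      · intro u hu
        rw [SimpleGraph.Walk.support_cons, List.mem_cons] at hu
        rcases hu with rfl | hu
        · exact le_refl _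
        · have := hsup' u hu
          omega
      · intro _
        rw [SimpleGraph.Walk.getVert_cons_succ, SimpleGraph.Walk.getVert_zero]


lemma GoodF.isTree {f : Fin n → Fin n} {ρ : Fin n} (hf : GoodF f ρ) :
    (funToGraph f).IsTree := by
  refine ⟨hf.connected, ?_⟩
  intro x c₀ hc₀
  -- pick a support vertex with maximal hitting time
  have hsupne : (c₀.support.toFinset : Finset (Fin n)).Nonempty := by
    refine ⟨x, ?_⟩
    rw [List.mem_toFinset]
    exact c₀.start_mem_support
  obtain ⟨u, hu_mem, hu_max⟩ := Finset.exists_max_image _ (hitT f ρ) hsupne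
  rw [List.mem_toFinset] at hu_mem
  have hmax : ∀ w ∈ c₀.support, hitT f ρ w ≤ hitT f ρ u := by
    intro w hw
    exact hu_max w (List.mem_toFinset.mpr hw)
  set c := c₀.rotate u hu_mem with hcdef
  have hc : c.IsCycle := hc₀.rotate hu_mem
  have hcsup : ∀ w ∈ c.support, w ∈ c₀.support := by
    intro w hw
    rw [SimpleGraph.Walk.mem_support_iff] at hw
    rcases hw with rfl | hw
    · exact hu_mem
    · have hperm := SimpleGraph.Walk.support_rotate c₀ u hu_mem
      have := hperm.mem_iff.mp hw
      exact List.mem_of_mem_tail this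
  -- decompose the cycle
  have hnotnil : ¬ c.Nil := by
    intro hnil
    exact hc.ne_nil hnil.eq_nil
  obtain ⟨u₁, ha, c₂, hceq⟩ := SimpleGraph.Walk.not_nil_iff.mp hnotnil
  -- claim: any neighbor of u in the support satisfies f-edge toward u impossible
  have neighbor_eq : ∀ w : Fin n, (funToGraph f).Adj u w → w ∈ c₀.support → f u = w := by
    intro w hadj hwsup
    rcases funToGraph_adj.mp hadj with ⟨hne, h | h⟩
    · exact h
    · exfalso
      have hwρ : w ≠ ρ := by
        rintro rfl
        rw [hf.1] at h
        exact hne h.symm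
      have := hitT_lt hf hwρ
      rw [h] at this
      have := hmax w hwsup
      omega
  have hu₁ : f u = u₁ := neighbor_eq u₁ ha (by
    refine hcsup u₁ ?_
    rw [hceq]
    rw [SimpleGraph.Walk.support_cons]
    exact List.mem_cons_of_mem _ c₂.start_mem_support)
  -- last edge
  have hc₂nil : ¬ c₂.Nil := by
    intro hnil
    have : u₁ = u := SimpleGraph.Walk.Nil.eq hnil
    exact ha.ne this.symm
  have hrevnil : ¬ c₂.reverse.Nil := by
    rw [SimpleGraph.Walk.nil_iff_length_eq, SimpleGraph.Walk.length_reverse]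
    rw [SimpleGraph.Walk.nil_iff_length_eq] at hc₂nil
    exact hc₂nil
  obtain ⟨u₂, hb, c₃, hc₂eq⟩ := SimpleGraph.Walk.not_nil_iff.mp hrevnil
  have hu₂ : f u = u₂ := by
    refine neighbor_eq u₂ hb ?_
    refine hcsup u₂ ?_
    have : u₂ ∈ c₂.reverse.support := by
      rw [hc₂eq, SimpleGraph.Walk.support_cons]
      exact List.mem_cons_of_mem _ c₃.start_mem_support
    rw [SimpleGraph.Walk.support_reverse, List.mem_reverse] at this
    rw [hceq, SimpleGraph.Walk.support_cons]
    exact List.mem_cons_of_mem _ this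
  -- so u₁ = u₂, and the first edge equals the last edge, contradicting edge-nodup
  have hedge : s(u, u₁) ∈ c₂.edges := by
    have : s(u, u₂) ∈ c₂.reverse.edges := by
      rw [hc₂eq, SimpleGraph.Walk.edges_cons]
      exact List.mem_cons_self
    rw [SimpleGraph.Walk.edges_reverse, List.mem_reverse] at this
    rwa [← hu₂, hu₁] at this
  have hnodup : c.edges.Nodup := hc.edges_nodup
  rw [hceq, SimpleGraph.Walk.edges_cons] at hnodup
  rw [List.nodup_cons] at hnodup
  exact hnodup.1 hedge


open SimpleGraph in
noncomputable def parentD (T : SimpleGraph (Fin n)) (ρ : Fin n) : Fin n → Fin n := fun v =>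
  if h : T.IsTree ∧ v ≠ ρ then ((h.1.existsUnique_path v ρ).exists.choose).getVert 1 else v

lemma parentD_root (T : SimpleGraph (Fin n)) (ρ : Fin n) : parentD T ρ ρ = ρ := by
  rw [parentD, dif_neg]
  simp

lemma parentD_spec {T : SimpleGraph (Fin n)} {ρ : Fin n} (hT : T.IsTree) {v : Fin n}
    (hv : v ≠ ρ) (p : T.Walk v ρ) (hp : p.IsPath) : parentD T ρ v = p.getVert 1 := by
  rw [parentD, dif_pos ⟨hT, hv⟩]
  congr 1
  exact (hT.existsUnique_path v ρ).unique ((⟨hT, hv⟩ : T.IsTree ∧ v ≠ ρ).1.existsUnique_path v ρ).exists.choose_spec hp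

lemma adj_parentD {T : SimpleGraph (Fin n)} {ρ : Fin n} (hT : T.IsTree) {v : Fin n}
    (hv : v ≠ ρ) : T.Adj v (parentD T ρ v) := by
  obtain ⟨p, hp⟩ := (hT.existsUnique_path v ρ).exists
  rw [parentD_spec hT hv p hp]
  exact p.adj_snd (SimpleGraph.Walk.not_nil_of_ne hv)

lemma good_parentD {T : SimpleGraph (Fin n)} {ρ : Fin n} (hT : T.IsTree) :
    GoodF (parentD T ρ) ρ := by
  refine ⟨parentD_root T ρ, ?_⟩
  have key : ∀ (v ρ' : Fin n) (p : T.Walk v ρ'), p.IsPath → ∃ j, (parentD T ρ')^[j] v = ρ' := by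
    intro v ρ' p
    induction p with
    | nil => exact fun _ => ⟨0, rfl⟩
    | @cons v u e h q ih =>
      intro hp
      rw [SimpleGraph.Walk.cons_isPath_iff] at hp
      have hvρ : v ≠ e := by
        rintro rfl
        exact hp.2 q.end_mem_support
      have hpar : parentD T e v = u := by
        rw [parentD_spec hT hvρ (SimpleGraph.Walk.cons h q) ((SimpleGraph.Walk.cons_isPath_iff _ _).mpr hp)]
        rw [SimpleGraph.Walk.getVert_cons_succ, SimpleGraph.Walk.getVert_zero]
      obtain ⟨j, hj⟩ := ih hp.1
      refine ⟨j + 1, ?_⟩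
      rw [Function.iterate_succ_apply, hpar]
      exact hj
  intro v
  obtain ⟨p, hp⟩ := (hT.existsUnique_path v ρ).exists
  exact key v ρ p hp

lemma funToGraph_parentD {T : SimpleGraph (Fin n)} {ρ : Fin n} (hT : T.IsTree) :
    funToGraph (parentD T ρ) = T := by
  ext v w
  rw [funToGraph_adj]
  constructor
  · rintro ⟨hne, h | h⟩
    · have hvρ : v ≠ ρ := by
        rintro rfl
        rw [parentD_root] at h
        exact hne h
      rw [← h]
      exact adj_parentD hT hvρ
    · have hwρ : w ≠ ρ := by
        rintro rfl
        rw [parentD_root] at h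
        exact hne h.symm
      rw [← h]
      exact (adj_parentD hT hwρ).symm
  · intro hadj
    refine ⟨hadj.ne, ?_⟩
    by_cases hvρ : v = ρ
    · subst hvρ
      refine Or.inr ?_
      have hwρ : w ≠ v := hadj.ne'
      have hsingle : (SimpleGraph.Walk.cons hadj.symm SimpleGraph.Walk.nil : T.Walk w v).IsPath := by
        rw [SimpleGraph.Walk.cons_isPath_iff]
        refine ⟨SimpleGraph.Walk.IsPath.nil, ?_⟩
        rw [SimpleGraph.Walk.support_nil]
        simpa using hwρ
      rw [parentD_spec hT hwρ _ hsingle]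
      rw [SimpleGraph.Walk.getVert_cons_succ, SimpleGraph.Walk.getVert_zero]
    · obtain ⟨p, hp⟩ := (hT.existsUnique_path v ρ).exists
      by_cases hw : w ∈ p.support
      · refine Or.inl ?_
        have hq : (p.takeUntil w hw).IsPath := hp.takeUntil hw
        have hvw : v ≠ w := hadj.ne
        have hsingle : (SimpleGraph.Walk.cons hadj SimpleGraph.Walk.nil : T.Walk v w).IsPath := by
          rw [SimpleGraph.Walk.cons_isPath_iff]
          exact ⟨SimpleGraph.Walk.IsPath.nil, by simp [SimpleGraph.Walk.support_nil, hvw]⟩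
        have huniq : p.takeUntil w hw = SimpleGraph.Walk.cons hadj SimpleGraph.Walk.nil :=
          (hT.existsUnique_path v w).unique hq hsingle
        rw [parentD_spec hT hvρ p hp]
        conv_lhs => rw [← SimpleGraph.Walk.take_spec p hw]
        rw [huniq]
        rw [SimpleGraph.Walk.getVert_append]
        simp
      · refine Or.inr ?_
        have hwρ : w ≠ ρ := by
          rintro rfl
          exact hw p.end_mem_support
        have hcons : (SimpleGraph.Walk.cons hadj.symm p : T.Walk w ρ).IsPath := by
          rw [SimpleGraph.Walk.cons_isPath_iff]
          exact ⟨hp, hw⟩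
        rw [parentD_spec hT hwρ _ hcons]
        rw [SimpleGraph.Walk.getVert_cons_succ, SimpleGraph.Walk.getVert_zero]

lemma parentD_funToGraph {f : Fin n → Fin n} {ρ : Fin n} (hf : GoodF f ρ) :
    parentD (funToGraph f) ρ = f := by
  funext v
  by_cases hvρ : v = ρ
  · subst hvρ
    rw [parentD_root, hf.1]
  · obtain ⟨p, hp, -, hgv⟩ := exists_path hf (hitT f ρ v) v le_rfl
    rw [parentD_spec hf.isTree hvρ p hp]
    exact hgv hvρ


def clusterP (f : Fin n → Fin n) (ρ : Fin n) (k : ℕ) (v : Fin n) : Prop :=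
  ∃ j, f^[j] v = ρ ∧ ∀ i ≤ j, ((f^[i] v : Fin n) : ℕ) < k

noncomputable def clusterSet (f : Fin n → Fin n) (ρ : Fin n) (k : ℕ) : Finset (Fin n) :=
  univ.filter (clusterP f ρ k)

lemma clusterP_lt {f : Fin n → Fin n} {ρ : Fin n} {k : ℕ} {v : Fin n}
    (h : clusterP f ρ k v) : (v : ℕ) < k := by
  obtain ⟨j, -, hb⟩ := h
  simpa using hb 0 (Nat.zero_le j)

lemma clusterP_root_lt {f : Fin n → Fin n} {ρ : Fin n} {k : ℕ} {v : Fin n}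
    (h : clusterP f ρ k v) : (ρ : ℕ) < k := by
  obtain ⟨j, hj, hb⟩ := h
  have := hb j le_rfl
  rwa [hj] at this

lemma clusterP_root {f : Fin n → Fin n} {ρ : Fin n} {k : ℕ} (h : (ρ : ℕ) < k) :
    clusterP f ρ k ρ := ⟨0, rfl, fun i hi => by rw [Nat.le_zero.mp hi]; simpa using h⟩

lemma clusterP_shift {f : Fin n → Fin n} {ρ : Fin n} {k : ℕ} {v : Fin n}
    (h : clusterP f ρ k v) (hv : v ≠ ρ) : clusterP f ρ k (f v) := by
  obtain ⟨j, hj, hb⟩ := h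
  have hj0 : j ≠ 0 := by
    rintro rfl
    exact hv hj
  refine ⟨j - 1, ?_, ?_⟩
  · have hj' : f^[j - 1 + 1] v = ρ := by
      rw [show j - 1 + 1 = j by omega]
      exact hj
    rw [Function.iterate_succ_apply] at hj'
    exact hj'
  · intro i hi
    have := hb (i + 1) (by omega)
    rwa [Function.iterate_succ_apply] at this

lemma clusterP_unshift {f : Fin n → Fin n} {ρ : Fin n} {k : ℕ} {v : Fin n}
    (hvk : (v : ℕ) < k) (h : clusterP f ρ k (f v)) : clusterP f ρ k v := by
  obtain ⟨j, hj, hb⟩ := h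
  refine ⟨j + 1, by rwa [Function.iterate_succ_apply], ?_⟩
  intro i hi
  cases i with
  | zero => simpa using hvk
  | succ i => rw [Function.iterate_succ_apply]; exact hb i (by omega)

lemma rootCluster_funToGraph {f : Fin n → Fin n} {ρ : Fin n} (hf : GoodF f ρ) (k : ℕ) :
    rootCluster (funToGraph f) ρ k = (clusterSet f ρ k).card := by
  rw [rootCluster, clusterSet]
  congr 1
  apply Finset.filter_congr
  intro v _
  constructor
  · rintro ⟨hvk, hreach⟩
    obtain ⟨w⟩ := hreach
    have hρk : (ρ : ℕ) < k := by
      cases w with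
      | nil => exact hvk
      | cons h _ => exact h.2.1
    have hclose : ∀ x y : Fin n, (restrictBelow (funToGraph f) k).Adj x y →
        clusterP f ρ k x → clusterP f ρ k y := by
      intro x y hadj hx
      obtain ⟨hxy, hxk, hyk⟩ := hadj
      rcases funToGraph_adj.mp hxy with ⟨hne, h | h⟩
      · have hxρ : x ≠ ρ := by
          rintro rfl
          rw [hf.1] at h
          exact hne h
        rw [← h]
        exact clusterP_shift hx hxρ
      · rw [← h] at hx
        exact clusterP_unshift hyk hx
    have hwalk : ∀ (x y : Fin n) (w : (restrictBelow (funToGraph f) k).Walk x y),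
        clusterP f ρ k x → clusterP f ρ k y := by
      intro x y w
      induction w with
      | nil => exact id
      | cons h _ ih => intro hx; exact ih (hclose _ _ h hx)
    exact hwalk ρ v w (clusterP_root hρk)
  · intro h
    refine ⟨clusterP_lt h, ?_⟩
    have key : ∀ (j : ℕ) (v : Fin n), f^[j] v = ρ → (∀ i ≤ j, ((f^[i] v : Fin n) : ℕ) < k) →
        (restrictBelow (funToGraph f) k).Reachable v ρ := by
      intro j
      induction j with
      | zero => intro v hv _; exact hv ▸ SimpleGraph.Reachable.refl v
      | succ j ih =>
        intro v hv hb
        by_cases hvρ : v = ρ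
        · exact hvρ ▸ SimpleGraph.Reachable.refl v
        · have hfv : f v ≠ v := fun hh => hvρ (hf.fix_iff.mp hh)
          have hadj : (restrictBelow (funToGraph f) k).Adj v (f v) := by
            refine ⟨funToGraph_adj.mpr ⟨fun hh => hfv hh.symm, Or.inl rfl⟩, ?_, ?_⟩
            · simpa using hb 0 (by omega)
            · simpa using hb 1 (by omega)
          rw [Function.iterate_succ_apply] at hv
          refine hadj.reachable.trans (ih (f v) hv ?_)
          intro i hi
          have := hb (i+1) (by omega)
          rwa [Function.iterate_succ_apply] at this
    obtain ⟨j, hj, hb⟩ := h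
    exact (key j v hj hb).symm


noncomputable def goodPairs (n : ℕ) : Finset ((Fin n → Fin n) × Fin n) :=
  univ.filter fun p => GoodF p.1 p.2

noncomputable def Kset (n k : ℕ) : Finset (Fin n) := univ.filter fun v => (v : ℕ) < k

lemma mem_Kset {n k : ℕ} {v : Fin n} : v ∈ Kset n k ↔ (v : ℕ) < k := by simp [Kset]

lemma cluster_char {n k : ℕ} {f : Fin n → Fin n} {ρ : Fin n} {S : Finset (Fin n)}
    (hS : S ⊆ Kset n k) (hρ : ρ ∈ S) :
    (GoodF f ρ ∧ clusterSet f ρ k = S) ↔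
      (f ρ = ρ ∧ (∀ v ∈ S, f v ∈ S) ∧ (∀ v ∈ S, ∃ j, f^[j] v = ρ)
        ∧ (∀ v ∈ Kset n k \ S, f v ∉ S) ∧ (∀ v, v ∉ S → ∃ j, f^[j] v ∈ S)) := by
  constructor
  · rintro ⟨hf, hset⟩
    have memS : ∀ v, v ∈ S ↔ clusterP f ρ k v := by
      intro v
      rw [← hset, clusterSet, mem_filter]
      simp
    refine ⟨hf.1, ?_, ?_, ?_, ?_⟩
    · intro v hv
      by_cases hvρ : v = ρ
      · subst hvρ; rw [hf.1]; exact hv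
      · rw [memS]
        exact clusterP_shift ((memS v).mp hv) hvρ
    · intro v hv
      obtain ⟨j, hj, -⟩ := (memS v).mp hv
      exact ⟨j, hj⟩
    · intro v hv hfv
      rw [Finset.mem_sdiff, mem_Kset] at hv
      have : clusterP f ρ k v := clusterP_unshift hv.1 ((memS _).mp hfv)
      exact hv.2 ((memS v).mpr this)
    · intro v _
      obtain ⟨j, hj⟩ := hf.2 v
      exact ⟨j, by rw [hj]; exact hρ⟩
  · rintro ⟨C1, C2, C3, C4, C5⟩
    have hgood : GoodF f ρ := by
      refine ⟨C1, fun v => ?_⟩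
      by_cases hv : v ∈ S
      · exact C3 v hv
      · obtain ⟨j1, hj1⟩ := C5 v hv
        obtain ⟨j2, hj2⟩ := C3 _ hj1
        exact ⟨j2 + j1, by rw [Function.iterate_add_apply]; exact hj2⟩
    refine ⟨hgood, ?_⟩
    ext v
    rw [clusterSet, mem_filter]
    simp only [mem_univ, true_and]
    constructor
    · intro hcp
      by_contra hvS
      obtain ⟨j, hj, hb⟩ := hcp
      have hexS : ∃ i, f^[i] v ∈ S := ⟨j, by rw [hj]; exact hρ⟩
      set i₀ := Nat.find hexS with hi₀def
      have hi₀S : f^[i₀] v ∈ S := Nat.find_spec hexS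
      have hi₀0 : i₀ ≠ 0 := by
        intro hh
        rw [hh] at hi₀S
        exact hvS hi₀S
      have hi₀j : i₀ ≤ j := Nat.find_min' hexS (by rw [hj]; exact hρ)
      have hprevS : f^[i₀ - 1] v ∉ S := Nat.find_min hexS (by omega)
      have hprevK : f^[i₀ - 1] v ∈ Kset n k := by
        rw [mem_Kset]
        exact hb (i₀ - 1) (by omega)
      have : f (f^[i₀ - 1] v) ∉ S := C4 _ (Finset.mem_sdiff.mpr ⟨hprevK, hprevS⟩)
      have heq : f (f^[i₀ - 1] v) = f^[i₀] v := by
        conv_rhs => rw [show i₀ = (i₀ - 1) + 1 by omega]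
        rw [Function.iterate_succ_apply']
      rw [heq] at this
      exact this hi₀S
    · intro hv
      obtain ⟨j, hj⟩ := C3 v hv
      refine ⟨j, hj, fun i _ => ?_⟩
      have : f^[i] v ∈ S := iter_stay C2 hv i
      have := hS this
      rwa [mem_Kset] at this

lemma char_card {n k : ℕ} {ρ : Fin n} {S : Finset (Fin n)}
    (hS : S ⊆ Kset n k) (hρ : ρ ∈ S) :
    (univ.filter fun f : Fin n → Fin n => GoodF f ρ ∧ clusterSet f ρ k = S).card
      = (CF (S.erase ρ) {ρ} ∅).card * (CF Sᶜ S (Kset n k \ S)).card := by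
  classical
  have hfilter : (univ.filter fun f : Fin n → Fin n => GoodF f ρ ∧ clusterSet f ρ k = S)
      = univ.filter fun f : Fin n → Fin n =>
        (f ρ = ρ ∧ (∀ v ∈ S, f v ∈ S) ∧ (∀ v ∈ S, ∃ j, f^[j] v = ρ)
          ∧ (∀ v ∈ Kset n k \ S, f v ∉ S) ∧ (∀ v, v ∉ S → ∃ j, f^[j] v ∈ S)) := by
    apply Finset.filter_congr
    intro f _
    exact cluster_char hS hρ
  rw [hfilter, ← Finset.card_product]
  refine Finset.card_bij'
    (fun f _hf => ((fun v => if v ∈ S then f v else v), (fun v => if v ∈ S then v else f v)))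
    (fun gh _hgh => fun v => if v ∈ S then gh.1 v else gh.2 v) ?_ ?_ ?_ ?_
  · intro f hf
    rw [mem_filter] at hf
    obtain ⟨-, C1, C2, C3, C4, C5⟩ := hf
    rw [Finset.mem_product]
    constructor
    · rw [mem_CF]
      refine ⟨?_, ?_, ?_, fun v hv => absurd hv (notMem_empty v)⟩
      · intro v hv
        by_cases hvS : v ∈ S
        · have hvρ : v = ρ := by
            by_contra hne
            exact hv (mem_erase.mpr ⟨hne, hvS⟩)
          subst hvρ
          simp only [if_pos hvS, C1]
        · simp only [if_neg hvS]
      · intro v hv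
        have hvS : v ∈ S := mem_of_mem_erase hv
        simp only [if_pos hvS]
        by_cases hfρ : f v = ρ
        · exact mem_union_right _ (by rw [hfρ]; exact mem_singleton_self ρ)
        · exact mem_union_left _ (mem_erase.mpr ⟨hfρ, C2 v hvS⟩)
      · intro v hv
        have hvS : v ∈ S := mem_of_mem_erase hv
        obtain ⟨j, hj⟩ := C3 v hvS
        refine ⟨j, ?_⟩
        have hagree : f^[j] v = (fun v => if v ∈ S then f v else v)^[j] v := by
          refine iter_agree (Q := fun x => x ∈ S) (fun x hx => by simp only [if_pos hx]) _ _ ?_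
          intro i _
          exact iter_stay C2 hvS i
        rw [← hagree, hj]
        exact mem_singleton_self ρ
    · rw [mem_CF]
      refine ⟨?_, ?_, ?_, ?_⟩
      · intro v hv
        rw [Finset.mem_compl, not_not] at hv
        simp only [if_pos hv]
      · intro v _
        have huniv : Sᶜ ∪ S = univ := by
          ext x
          by_cases hx : x ∈ S <;> simp [hx]
        rw [huniv]
        exact mem_univ _
      · intro v hv
        rw [Finset.mem_compl] at hv
        obtain ⟨j0, hj0⟩ := C5 v hv
        have hexS : ∃ i, f^[i] v ∈ S := ⟨j0, hj0⟩
        refine ⟨Nat.find hexS, ?_⟩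
        have hagree : f^[Nat.find hexS] v = (fun v => if v ∈ S then v else f v)^[Nat.find hexS] v := by
          refine iter_agree (Q := fun x => x ∉ S) (fun x hx => by simp only [if_neg hx]) _ _ ?_
          intro i hi
          exact Nat.find_min hexS hi
        rw [← hagree]
        exact Nat.find_spec hexS
      · intro v hv
        rw [Finset.mem_sdiff] at hv
        simp only [if_neg hv.2]
        exact C4 v (Finset.mem_sdiff.mpr hv)
  · rintro ⟨g, h⟩ hgh
    dsimp only
    rw [Finset.mem_product, mem_CF, mem_CF] at hgh
    obtain ⟨⟨hg1, hg2, hg3, -⟩, hh1, hh2, hh3, hh4⟩ := hgh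
    dsimp only at hg1 hg2 hg3 hh1 hh2 hh3 hh4
    have hgρ : g ρ = ρ := hg1 ρ (by simp)
    have hgS : ∀ x ∈ S, g x ∈ S := by
      intro x hx
      by_cases hxρ : x = ρ
      · subst hxρ; rw [hgρ]; exact hx
      · have := hg2 x (mem_erase.mpr ⟨hxρ, hx⟩)
        rw [mem_union] at this
        rcases this with h' | h'
        · exact mem_of_mem_erase h'
        · rw [mem_singleton] at h'
          rw [h']
          exact hρ
    set f : Fin n → Fin n := fun v => if v ∈ S then g v else h v with hfdef
    have hfS : ∀ x ∈ S, f x = g x := fun x hx => by simp only [hfdef, if_pos hx]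
    have hfnS : ∀ x, x ∉ S → f x = h x := fun x hx => by simp only [hfdef, if_neg hx]
    have hfSS : ∀ x ∈ S, f x ∈ S := fun x hx => by rw [hfS x hx]; exact hgS x hx
    rw [mem_filter]
    refine ⟨mem_univ _, ?_, hfSS, ?_, ?_, ?_⟩
    · rw [hfS ρ hρ]; exact hgρ
    · intro v hv
      by_cases hvρ : v = ρ
      · exact ⟨0, by rw [hvρ, Function.iterate_zero_apply]⟩
      · obtain ⟨j, hj⟩ := hg3 v (mem_erase.mpr ⟨hvρ, hv⟩)
        rw [mem_singleton] at hj
        refine ⟨j, ?_⟩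
        have hagree : f^[j] v = g^[j] v := by
          refine iter_agree (Q := fun x => x ∈ S) hfS _ _ ?_
          intro i _
          exact iter_stay hfSS hv i
        rw [hagree, hj]
    · intro v hv
      rw [Finset.mem_sdiff] at hv
      rw [hfnS v hv.2]
      exact hh4 v (Finset.mem_sdiff.mpr hv)
    · intro v hv
      have hvc : v ∈ Sᶜ := mem_compl.mpr hv
      obtain ⟨j, hj⟩ := hh3 v hvc
      have hexS : ∃ i, h^[i] v ∈ S := ⟨j, hj⟩
      refine ⟨Nat.find hexS, ?_⟩
      have hagree : h^[Nat.find hexS] v = f^[Nat.find hexS] v := by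
        refine iter_agree (Q := fun x => x ∉ S) (fun x hx => (hfnS x hx).symm) _ _ ?_
        intro i hi
        exact Nat.find_min hexS hi
      rw [← hagree]
      exact Nat.find_spec hexS
  · intro f hf
    funext v
    by_cases hvS : v ∈ S <;> simp [hvS]
  · rintro ⟨g, h⟩ hgh
    dsimp only
    rw [Finset.mem_product, mem_CF, mem_CF] at hgh
    obtain ⟨⟨hg1, -, -, -⟩, hh1, -, -, -⟩ := hgh
    dsimp only at hg1 hh1
    refine Prod.ext ?_ ?_
    · funext v
      by_cases hvS : v ∈ S
      · simp [hvS]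
      · simp only [if_neg hvS]
        exact (hg1 v (fun hc => hvS (mem_of_mem_erase hc))).symm
    · funext v
      by_cases hvS : v ∈ S
      · simp only [if_pos hvS]
        exact (hh1 v (fun hc => (mem_compl.mp hc) hvS)).symm
      · simp [hvS]


lemma mem_rootedTreeSet {n : ℕ} {p : SimpleGraph (Fin n) × Fin n} :
    p ∈ rootedTreeSet n ↔ p.1.IsTree := by simp [rootedTreeSet]

lemma mem_goodPairs {n : ℕ} {p : (Fin n → Fin n) × Fin n} :
    p ∈ goodPairs n ↔ GoodF p.1 p.2 := by simp [goodPairs]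

lemma tree_count_eq (n k m : ℕ) :
    ((rootedTreeSet n).filter fun p => rootCluster p.1 p.2 k = m).card
      = ((goodPairs n).filter fun p => (clusterSet p.1 p.2 k).card = m).card := by
  refine Finset.card_bij' (fun p _ => (parentD p.1 p.2, p.2)) (fun q _ => (funToGraph q.1, q.2))
    ?_ ?_ ?_ ?_
  · intro p hp
    rw [mem_filter] at hp ⊢
    obtain ⟨htree, hrc⟩ := hp
    rw [mem_rootedTreeSet] at htree
    refine ⟨mem_goodPairs.mpr (good_parentD htree), ?_⟩
    have h1 := rootCluster_funToGraph (ρ := p.2) (good_parentD htree) k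
    rw [funToGraph_parentD htree] at h1
    rw [← h1]
    exact hrc
  · intro q hq
    rw [mem_filter] at hq ⊢
    obtain ⟨hgood, hcs⟩ := hq
    rw [mem_goodPairs] at hgood
    refine ⟨mem_rootedTreeSet.mpr hgood.isTree, ?_⟩
    rw [rootCluster_funToGraph hgood k]
    exact hcs
  · intro p hp
    rw [mem_filter, mem_rootedTreeSet] at hp
    exact Prod.ext (funToGraph_parentD hp.1) rfl
  · intro q hq
    rw [mem_filter, mem_goodPairs] at hq
    exact Prod.ext (parentD_funToGraph hq.1) rfl

lemma tree_denom_eq (n : ℕ) : (rootedTreeSet n).card = (goodPairs n).card := by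
  refine Finset.card_bij' (fun p _ => (parentD p.1 p.2, p.2)) (fun q _ => (funToGraph q.1, q.2))
    ?_ ?_ ?_ ?_
  · intro p hp
    rw [mem_rootedTreeSet] at hp
    exact mem_goodPairs.mpr (good_parentD hp)
  · intro q hq
    rw [mem_goodPairs] at hq
    exact mem_rootedTreeSet.mpr hq.isTree
  · intro p hp
    rw [mem_rootedTreeSet] at hp
    exact Prod.ext (funToGraph_parentD hp) rfl
  · intro q hq
    rw [mem_goodPairs] at hq
    exact Prod.ext (parentD_funToGraph hq) rfl

lemma goodPairs_snd_count {n : ℕ} (t : Finset (Fin n)) :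
    ((goodPairs n).filter fun p => p.2 ∈ t).card
      = ∑ ρ ∈ t, (univ.filter fun f : Fin n → Fin n => GoodF f ρ).card := by
  classical
  have hmaps : ∀ p ∈ (goodPairs n).filter fun p => p.2 ∈ t, p.2 ∈ t := by
    intro p hp
    rw [mem_filter] at hp
    exact hp.2
  rw [Finset.card_eq_sum_card_fiberwise hmaps]
  refine Finset.sum_congr rfl fun ρ hρ => ?_
  refine Finset.card_bij' (fun p _ => p.1) (fun f _ => (f, ρ)) ?_ ?_ ?_ ?_
  · intro p hp
    rw [mem_filter, mem_filter, mem_goodPairs] at hp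
    rw [mem_filter]
    obtain ⟨⟨hg, -⟩, hsnd⟩ := hp
    rw [hsnd] at hg
    exact ⟨mem_univ _, hg⟩
  · intro f hf
    rw [mem_filter] at hf
    rw [mem_filter, mem_filter, mem_goodPairs]
    exact ⟨⟨hf.2, hρ⟩, rfl⟩
  · intro p hp
    rw [mem_filter] at hp
    exact Prod.ext rfl hp.2.symm
  · intro f _
    rfl

lemma goodF_eq_CF {n : ℕ} (ρ : Fin n) :
    (univ.filter fun f : Fin n → Fin n => GoodF f ρ) = CF (univ.erase ρ) {ρ} ∅ := by
  ext f
  rw [mem_filter, mem_CF]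
  constructor
  · rintro ⟨-, hf⟩
    refine ⟨?_, ?_, ?_, fun v hv => absurd hv (notMem_empty v)⟩
    · intro v hv
      have : v = ρ := by
        by_contra hne
        exact hv (mem_erase.mpr ⟨hne, mem_univ v⟩)
      rw [this]
      exact hf.1
    · intro v _
      have huniv : univ.erase ρ ∪ {ρ} = univ := by
        ext x
        by_cases hx : x = ρ <;> simp [hx]
      rw [huniv]
      exact mem_univ _
    · intro v _
      obtain ⟨j, hj⟩ := hf.2 v
      exact ⟨j, by rw [hj]; exact mem_singleton_self ρ⟩
  · rintro ⟨h1, -, h3, -⟩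
    have hρρ : f ρ = ρ := h1 ρ (Finset.notMem_erase ρ univ)
    refine ⟨mem_univ _, hρρ, fun v => ?_⟩
    by_cases hv : v = ρ
    · exact ⟨0, by rw [hv, Function.iterate_zero_apply]⟩
    · obtain ⟨j, hj⟩ := h3 v (mem_erase.mpr ⟨hv, mem_univ v⟩)
      exact ⟨j, mem_singleton.mp hj⟩

lemma goodF_card {n : ℕ} (ρ : Fin n) :
    (univ.filter fun f : Fin n → Fin n => GoodF f ρ).card
      = if n = 1 then 1 else n ^ (n - 2) := by
  have hn : 0 < n := ρ.pos
  have hdisj : Disjoint (univ.erase ρ) ({ρ} : Finset (Fin n)) := by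
    rw [Finset.disjoint_singleton_right]
    exact Finset.notMem_erase ρ univ
  have hcard : (univ.erase ρ).card = n - 1 := by
    rw [Finset.card_erase_of_mem (mem_univ ρ), Finset.card_univ, Fintype.card_fin]
  rw [goodF_eq_CF, CF_card_L1 (univ.erase ρ).card _ _ rfl hdisj ⟨ρ, mem_singleton_self ρ⟩]
  rcases eq_or_ne n 1 with rfl | hn1
  · rw [if_pos (by rw [← Finset.card_eq_zero, hcard])]
    simp
  · rw [if_neg (by
      intro hh
      rw [hh] at hcard
      simp only [Finset.card_empty] at hcard
      omega), if_neg hn1]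
    rw [hcard, Finset.card_singleton]
    rw [show n - 1 + 1 = n by omega, one_mul, show n - 1 - 1 = n - 2 by omega]

lemma goodPairs_card {n : ℕ} (hn : 1 ≤ n) : (goodPairs n).card = n ^ (n - 1) := by
  have h0 : goodPairs n = (goodPairs n).filter fun p => p.2 ∈ (univ : Finset (Fin n)) := by
    rw [Finset.filter_true_of_mem]
    intro _ _
    exact mem_univ _
  rw [h0, goodPairs_snd_count univ]
  have : ∀ ρ ∈ (univ : Finset (Fin n)), (univ.filter fun f : Fin n → Fin n => GoodF f ρ).card
      = if n = 1 then 1 else n ^ (n - 2) := fun ρ _ => goodF_card ρ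
  rw [Finset.sum_congr rfl this, Finset.sum_const, Finset.card_univ, Fintype.card_fin, smul_eq_mul]
  rcases eq_or_ne n 1 with rfl | hn1
  · simp
  · rw [if_neg hn1, ← pow_succ']
    congr 1
    omega


lemma Kset_card {n k : ℕ} (hk : k ≤ n) : (Kset n k).card = k := by
  conv_rhs => rw [← Finset.card_range k]
  refine Finset.card_bij' (fun v _ => (v : ℕ)) (fun i hi => (⟨i, by
      rw [mem_range] at hi
      omega⟩ : Fin n)) ?_ ?_ ?_ ?_
  · intro v hv
    rw [mem_Kset] at hv
    rw [mem_range]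
    exact hv
  · intro i hi
    rw [mem_Kset]
    rw [mem_range] at hi
    exact hi
  · intro v _
    exact Fin.ext rfl
  · intro i _
    rfl

lemma clusterSet_eq_empty_iff {n k : ℕ} {f : Fin n → Fin n} {ρ : Fin n} :
    clusterSet f ρ k = ∅ ↔ ¬ ((ρ : ℕ) < k) := by
  constructor
  · intro h hρ
    have : ρ ∈ clusterSet f ρ k := by
      rw [clusterSet, mem_filter]
      exact ⟨mem_univ _, clusterP_root hρ⟩
    rw [h] at this
    exact absurd this (notMem_empty _)
  · intro h
    rw [Finset.eq_empty_iff_forall_notMem]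
    intro v hv
    rw [clusterSet, mem_filter] at hv
    exact h (clusterP_root_lt hv.2)

lemma count_zero {n k : ℕ} (hk : k ≤ n) :
    ((goodPairs n).filter fun p => (clusterSet p.1 p.2 k).card = 0).card
      = (n - k) * (if n = 1 then 1 else n ^ (n - 2)) := by
  have hfilter : ((goodPairs n).filter fun p => (clusterSet p.1 p.2 k).card = 0)
      = (goodPairs n).filter fun p => p.2 ∈ (Kset n k)ᶜ := by
    apply Finset.filter_congr
    intro p _
    rw [Finset.card_eq_zero, clusterSet_eq_empty_iff, Finset.mem_compl, mem_Kset]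
  rw [hfilter, goodPairs_snd_count]
  have hc : ((Kset n k)ᶜ : Finset (Fin n)).card = n - k := by
    rw [Finset.card_compl, Kset_card hk, Fintype.card_fin]
  rw [Finset.sum_congr rfl (fun ρ _ => goodF_card ρ), Finset.sum_const, hc, smul_eq_mul]

lemma count_main {n k m : ℕ} (hm : 1 ≤ m) (hmk : m ≤ k) (hkn : k < n) :
    ((goodPairs n).filter fun p => (clusterSet p.1 p.2 k).card = m).card
      = k.choose m * (m * ((if m = 1 then 1 else m ^ (m - 2)) *
          (if m = k then m * n ^ (n - m - 1)
            else (n - k) * (m * ((n - m) ^ (k - m - 1) * n ^ (n - k - 1)))))) := by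
  classical
  set W : ℕ := (if m = 1 then 1 else m ^ (m - 2)) *
      (if m = k then m * n ^ (n - m - 1)
        else (n - k) * (m * ((n - m) ^ (k - m - 1) * n ^ (n - k - 1)))) with hW
  -- the key per-(S, ρ) computation
  have hfibval : ∀ (S : Finset (Fin n)) (ρ : Fin n), S ⊆ Kset n k → S.card = m → ρ ∈ S →
      (CF (S.erase ρ) {ρ} ∅).card * (CF Sᶜ S (Kset n k \ S)).card = W := by
    intro S ρ hSsub hScard hρ
    have hKcard : (Kset n k).card = k := Kset_card hkn.le
    have hW1 : (CF (S.erase ρ) {ρ} ∅).card = if m = 1 then 1 else m ^ (m - 2) := by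
      have hdisj : Disjoint (S.erase ρ) ({ρ} : Finset (Fin n)) := by
        rw [Finset.disjoint_singleton_right]
        exact Finset.notMem_erase ρ S
      have hcard : (S.erase ρ).card = m - 1 := by
        rw [Finset.card_erase_of_mem hρ, hScard]
      rw [CF_card_L1 (S.erase ρ).card _ _ rfl hdisj ⟨ρ, mem_singleton_self ρ⟩]
      rcases eq_or_ne m 1 with rfl | hm1
      · rw [if_pos (by rw [← Finset.card_eq_zero, hcard]), if_pos rfl]
      · rw [if_neg (by
          intro hh
          rw [hh] at hcard
          simp only [Finset.card_empty] at hcard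
          omega), if_neg hm1, hcard, Finset.card_singleton]
        rw [show m - 1 + 1 = m by omega, one_mul, show m - 1 - 1 = m - 2 by omega]
    have hcompl : (Sᶜ : Finset (Fin n)).card = n - m := by
      rw [Finset.card_compl, hScard, Fintype.card_fin]
    have hdisj2 : Disjoint (Sᶜ : Finset (Fin n)) S := disjoint_compl_left
    have hSne : S.Nonempty := ⟨ρ, hρ⟩
    have hW2 : (CF Sᶜ S (Kset n k \ S)).card
        = (if m = k then m * n ^ (n - m - 1)
            else (n - k) * (m * ((n - m) ^ (k - m - 1) * n ^ (n - k - 1)))) := by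
      rcases eq_or_ne m k with rfl | hmk2
      · -- S = Kset, so F = ∅
        have hSK : S = Kset n m := Finset.eq_of_subset_of_card_le hSsub (by omega)
        have hFempty : Kset n m \ S = ∅ := by
          rw [hSK, Finset.sdiff_self]
        rw [if_pos rfl, hFempty]
        rw [CF_card_L1 ((Sᶜ : Finset (Fin n))).card _ _ rfl disjoint_compl_left hSne]
        rw [if_neg (by
          intro hh
          rw [hh] at hcompl
          simp only [Finset.card_empty] at hcompl
          omega)]
        rw [hcompl, hScard, show n - m + m = n by omega]
      · rw [if_neg hmk2]
        have hFsub : Kset n k \ S ⊆ Sᶜ := by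
          intro v hv
          rw [Finset.mem_sdiff] at hv
          exact Finset.mem_compl.mpr hv.2
        have hFcard : (Kset n k \ S).card = k - m := by
          rw [Finset.card_sdiff_of_subset hSsub, hKcard, hScard]
        have hAF : Sᶜ \ (Kset n k \ S) = (Kset n k)ᶜ := by
          ext v
          rw [Finset.mem_sdiff, Finset.mem_compl, Finset.mem_compl, Finset.mem_sdiff]
          constructor
          · rintro ⟨hvS, hv⟩ hvK
            exact hvS (not_not.mp (fun hns => hv ⟨hvK, hns⟩))
          · intro hvK
            exact ⟨fun hvS => hvK (hSsub hvS), fun hc => hvK hc.1⟩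
        have hAFcard : (Sᶜ \ (Kset n k \ S)).card = n - k := by
          rw [hAF, Finset.card_compl, hKcard, Fintype.card_fin]
        rw [CF_card_L2 Sᶜ S (Kset n k \ S) hdisj2 hFsub hSne
          (Finset.card_pos.mp (by omega : 0 < (Kset n k \ S).card))
          (Finset.card_pos.mp (by omega : 0 < (Sᶜ \ (Kset n k \ S)).card))]
        rw [hAFcard, hcompl, hFcard, hScard]
        rw [show m + (n - m) = n by omega]
    rw [hW1, hW2, hW]
  -- fiberwise decomposition
  have hmaps : ∀ p ∈ (goodPairs n).filter fun p => (clusterSet p.1 p.2 k).card = m,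
      ((clusterSet p.1 p.2 k, p.2) : Finset (Fin n) × Fin n)
        ∈ (Kset n k).powersetCard m ×ˢ univ := by
    intro p hp
    rw [mem_filter] at hp
    rw [Finset.mem_product, Finset.mem_powersetCard]
    refine ⟨⟨?_, hp.2⟩, mem_univ _⟩
    intro v hv
    rw [clusterSet, mem_filter] at hv
    rw [mem_Kset]
    exact clusterP_lt hv.2
  rw [Finset.card_eq_sum_card_fiberwise hmaps]
  have hfib : ∀ b ∈ (Kset n k).powersetCard m ×ˢ (univ : Finset (Fin n)),
      (((goodPairs n).filter fun p => (clusterSet p.1 p.2 k).card = m).filter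
        fun p => ((clusterSet p.1 p.2 k, p.2) : Finset (Fin n) × Fin n) = b).card
      = if b.2 ∈ b.1 then W else 0 := by
    rintro ⟨S, ρ⟩ hb
    rw [Finset.mem_product, Finset.mem_powersetCard] at hb
    obtain ⟨⟨hSsub, hScard⟩, -⟩ := hb
    dsimp only
    by_cases hρS : ρ ∈ S
    · rw [if_pos hρS]
      rw [← hfibval S ρ hSsub hScard hρS, ← char_card hSsub hρS]
      refine Finset.card_bij' (fun p _ => p.1) (fun f _ => (f, ρ)) ?_ ?_ ?_ ?_
      · intro p hp
        dsimp only
        rw [mem_filter, mem_filter, mem_goodPairs] at hp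
        obtain ⟨⟨hg, -⟩, hkey⟩ := hp
        rw [Prod.mk.injEq] at hkey
        rw [mem_filter]
        refine ⟨mem_univ _, ?_, ?_⟩
        · rw [← hkey.2]
          exact hg
        · rw [← hkey.2]
          exact hkey.1
      · intro f hf
        rw [mem_filter] at hf
        obtain ⟨-, hgood, hcs⟩ := hf
        rw [mem_filter, mem_filter, mem_goodPairs]
        refine ⟨⟨hgood, by rw [hcs, hScard]⟩, by rw [hcs]⟩
      · intro p hp
        rw [mem_filter] at hp
        have := hp.2
        rw [Prod.mk.injEq] at this
        exact Prod.ext rfl this.2.symm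
      · intro f _
        rfl
    · rw [if_neg hρS, Finset.card_eq_zero, Finset.eq_empty_iff_forall_notMem]
      intro p hp
      rw [mem_filter, mem_filter, mem_goodPairs] at hp
      obtain ⟨⟨hg, hcard⟩, hkey⟩ := hp
      rw [Prod.mk.injEq] at hkey
      have hSne : S.Nonempty := by
        rw [← Finset.card_pos, hScard]
        omega
      obtain ⟨v, hv⟩ := hSne
      rw [← hkey.1] at hv
      rw [clusterSet, mem_filter] at hv
      have hρk : ((p.2 : Fin n) : ℕ) < k := clusterP_root_lt hv.2
      have : p.2 ∈ clusterSet p.1 p.2 k := by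
        rw [clusterSet, mem_filter]
        exact ⟨mem_univ _, clusterP_root hρk⟩
      rw [hkey.1] at this
      rw [← hkey.2] at hρS
      exact hρS this
  rw [Finset.sum_congr rfl hfib]
  rw [Finset.sum_product]
  have hinner : ∀ S ∈ (Kset n k).powersetCard m,
      (∑ ρ ∈ (univ : Finset (Fin n)), if ρ ∈ S then W else 0) = m * W := by
    intro S hS
    rw [Finset.mem_powersetCard] at hS
    rw [Finset.sum_ite_mem, Finset.univ_inter, Finset.sum_const, smul_eq_mul, hS.2]
  rw [Finset.sum_congr rfl hinner, Finset.sum_const, Finset.card_powersetCard,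
    Kset_card hkn.le, smul_eq_mul]
end AuxGraph

/-- Exact distribution of the root cluster size `R_n^{(k)}`:
`P(R_n^{(k)} = 0) = 1 - k/n`; for `1 ≤ m ≤ k < n`,
`P(R_n^{(k)} = m) = C(k,m) m^m (n-k) (n-m)^{k-m-1} / n^k` (the exponent `k-m-1` being an
integer exponent, so that for `m = k` the factor `(n-k)(n-m)^{k-m-1}` equals
`(n-k)(n-k)⁻¹ = 1`); and `P(R_n^{(n)} = n) = 1`. -/
theorem root_cluster_distribution (n k : ℕ) (hn : 1 ≤ n) (hk : k ≤ n) :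
    probR n k 0 = 1 - (k : ℝ) / (n : ℝ)
    ∧ (∀ m : ℕ, 1 ≤ m → m ≤ k → k < n →
        probR n k m
          = (k.choose m : ℝ) * (m : ℝ) ^ m * ((n : ℝ) - (k : ℝ))
              * ((n : ℝ) - (m : ℝ)) ^ ((k : ℤ) - (m : ℤ) - 1) / (n : ℝ) ^ k)
    ∧ (k = n → probR n n n = 1) := by
  classical
  have hn0 : (0:ℝ) < (n:ℝ) := by exact_mod_cast hn
  have htval : (rootedTreeSet n).card = n ^ (n-1) := by
    rw [tree_denom_eq, goodPairs_card hn]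
  have hsplit : n ^ (n - 1) = n * (if n = 1 then 1 else n ^ (n - 2)) := by
    rcases eq_or_ne n 1 with rfl | h1
    · simp
    · rw [if_neg h1, ← pow_succ']
      congr 1
      omega
  have hdne : ((rootedTreeSet n).card : ℝ) ≠ 0 := by
    rw [htval]
    positivity
  refine ⟨?_, ?_, ?_⟩
  · -- m = 0
    have h0 : ((rootedTreeSet n).filter fun p => rootCluster p.1 p.2 k = 0).card
        = (n - k) * (if n = 1 then 1 else n ^ (n - 2)) :=
      (tree_count_eq n k 0).trans (count_zero hk)
    set T : ℕ := if n = 1 then 1 else n ^ (n - 2) with hT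
    have htne : ((T : ℕ) : ℝ) ≠ 0 := by
      rcases eq_or_ne n 1 with h1 | h1
      · rw [hT, if_pos h1]
        simp
      · rw [hT, if_neg h1]
        positivity
    rw [probR, h0, htval, hsplit]
    push_cast [Nat.cast_sub hk]
    rw [mul_div_mul_right _ _ htne]
    rw [sub_div]
    rw [div_self (ne_of_gt hn0)]
  · -- main case
    intro m hm hmk hkn
    have hkey := (tree_count_eq n k m).trans (count_main hm hmk hkn)
    have hmm_pow : (if m = 1 then 1 else m ^ (m - 2)) * (m * m) = m ^ m := by
      rcases eq_or_ne m 1 with rfl | h1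
      · simp
      · rw [if_neg h1]
        calc m ^ (m-2) * (m * m) = m ^ (m - 2 + 2) := by rw [pow_add]; ring
          _ = m ^ m := by congr 1; omega
    have hnm : m ≤ n := hmk.trans hkn.le
    rcases eq_or_ne m k with rfl | hmk2
    · -- m = k
      rw [if_pos rfl] at hkey
      have hNat : ((rootedTreeSet n).filter fun p => rootCluster p.1 p.2 m = m).card
          = m.choose m * (m ^ m * n ^ (n - m - 1)) := by
        rw [hkey]
        rw [← hmm_pow]
        ring
      rw [probR, hNat, htval]
      have hz : ((m:ℤ) - (m:ℤ) - 1) = -1 := by ring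
      rw [hz, zpow_neg_one]
      have hnm1 : ((n:ℝ) - (m:ℝ)) ≠ 0 := by
        have : (m:ℝ) < (n:ℝ) := by exact_mod_cast hkn
        intro hc
        have := sub_eq_zero.mp hc
        linarith
      have hcancel : ((n:ℝ) - (m:ℝ)) * ((n:ℝ) - (m:ℝ))⁻¹ = 1 := mul_inv_cancel₀ hnm1
      have hp : (n:ℝ) ^ (n - 1) = (n:ℝ) ^ m * (n:ℝ) ^ (n - m - 1) := by
        rw [← pow_add]
        congr 1
        omega
      push_cast
      rw [hp]
      rw [show (n:ℝ) - (m:ℝ) = (n:ℝ) - (m:ℝ) from rfl]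
      field_simp
    · -- m < k
      rw [if_neg hmk2] at hkey
      have hNat : ((rootedTreeSet n).filter fun p => rootCluster p.1 p.2 k = m).card
          = k.choose m * (m ^ m * ((n - k) * ((n - m) ^ (k - m - 1) * n ^ (n - k - 1)))) := by
        rw [hkey, ← hmm_pow]
        ring
      rw [probR, hNat, htval]
      have hzz : ((k:ℤ) - (m:ℤ) - 1) = ((k - m - 1 : ℕ) : ℤ) := by omega
      rw [hzz, zpow_natCast]
      have hp : (n:ℝ) ^ (n - 1) = (n:ℝ) ^ k * (n:ℝ) ^ (n - k - 1) := by
        rw [← pow_add]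
        congr 1
        omega
      have hnkc : ((n - k : ℕ) : ℝ) = (n:ℝ) - (k:ℝ) := by
        push_cast [Nat.cast_sub hkn.le]
        ring
      have hnmc : ((n - m : ℕ) : ℝ) = (n:ℝ) - (m:ℝ) := by
        push_cast [Nat.cast_sub hnm]
        ring
      push_cast [hnkc, hnmc]
      rw [hp]
      have hne2 : (n:ℝ) ^ (n - k - 1) ≠ 0 := by positivity
      have hne3 : (n:ℝ) ^ k ≠ 0 := by positivity
      field_simp
  · -- m = n
    intro _
    have hall : ((rootedTreeSet n).filter fun p => rootCluster p.1 p.2 n = n).card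
        = (rootedTreeSet n).card := by
      rw [tree_count_eq n n n, tree_denom_eq]
      congr 1
      rw [Finset.filter_true_of_mem]
      intro p hp
      rw [mem_goodPairs] at hp
      have hcs : clusterSet p.1 p.2 n = Finset.univ := by
        rw [Finset.eq_univ_iff_forall]
        intro v
        rw [clusterSet, Finset.mem_filter]
        obtain ⟨j, hj⟩ := hp.2 v
        exact ⟨Finset.mem_univ _, ⟨j, hj, fun i _ => Fin.is_lt _⟩⟩
      rw [hcs, Finset.card_univ, Fintype.card_fin]
    rw [probR, hall, div_self hdne]
end
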